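/- arXiv:2508.03150 — 3 statements merged into one kernel-verified Lean document; each statement's English description precedes it below -/
import Mathlib

section
/- Weyl-type formula: Let R be a commutative ring, N a positive integer, and suppose an N×N matrix X over R factors as X = L·D·U with L lower unitriangular, D diagonal, and U upper unitriangular. Let r be an integer with 0 ≤ r ≤ N and λ a partition with ℓ(λ) ≤ r and λ_1 ≤ N−r. Then det of the r×r submatrix of X with rows {1,…,r} and columns J(λ;r) equals (∏_{i=1}^{r} D_{ii}) · S^{(r)}_{λ}(U). (Equivalently, when ∏_{i≤r} D_{ii} is invertible, S^{(r)}_{λ}(U) = ξ^{1,…,r}_{J(λ;r)}(X) / ξ^{1,…,r}_{1,…,r}(X), where ξ^I_J(X) denotes the minor of X on rows I and columns J.) -/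
open Matrix BigOperators Finset Filter

/-- Extend a `Fin N`-indexed matrix to `ℕ` indices by zero. -/
def matExt {R : Type*} [Zero R] {N : ℕ} (U : Matrix (Fin N) (Fin N) R) : ℕ → ℕ → R :=
  fun i j => if hi : i < N then (if hj : j < N then U ⟨i, hi⟩ ⟨j, hj⟩ else 0) else 0

/-- `U` is upper unitriangular. -/
def UpperUni {R : Type*} [Zero R] [One R] {N : ℕ} (U : Matrix (Fin N) (Fin N) R) : Prop :=
  (∀ i, U i i = 1) ∧ ∀ i j : Fin N, (j : ℕ) < (i : ℕ) → U i j = 0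

/-- `L` is lower unitriangular. -/
def LowerUni {R : Type*} [Zero R] [One R] {N : ℕ} (L : Matrix (Fin N) (Fin N) R) : Prop :=
  (∀ i, L i i = 1) ∧ ∀ i j : Fin N, (i : ℕ) < (j : ℕ) → L i j = 0

/-- 0-based entries of the Maya diagram `J(λ;r)` (the `a`-th smallest element, minus 1):
for `a = 0,…,r-1` this is `λ_{r-a} + a` (with `λ` 0-based). -/
def maya (lam : ℕ → ℕ) (r : ℕ) (a : Fin r) : ℕ := lam (r - 1 - (a : ℕ)) + (a : ℕ)

/-- The ninth variation of the skew Schur function `S^{(r)}_{λ/μ}(U)`: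
the minor of `U` on rows `J(μ;r)` and columns `J(λ;r)`. -/
def SchurV {R : Type*} [CommRing R] {N : ℕ} (U : Matrix (Fin N) (Fin N) R)
    (r : ℕ) (lam mu : ℕ → ℕ) : R :=
  Matrix.det (Matrix.of fun i j : Fin r => matExt U (maya mu r i) (maya lam r j))

/-- Conjugate partition (0-based), counting parts among indices `< B`. -/
def conjF (f : ℕ → ℕ) (B : ℕ) : ℕ → ℕ :=
  fun i => ((Finset.range B).filter fun j => i + 1 ≤ f j).card

/-- The hook partition `(a+1, 1^b)` (0-based function). -/
def hookP (a b : ℕ) : ℕ → ℕ := fun k => if k = 0 then a + 1 else if k ≤ b then 1 else 0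

/-- `h^{(r)}_d(U) = S^{(r)}_{(d)}(U)`, zero for `d < 0`. -/
def hSV {R : Type*} [CommRing R] {N : ℕ} (U : Matrix (Fin N) (Fin N) R) (r : ℕ) (d : ℤ) : R :=
  if 0 ≤ d then SchurV U r (fun k => if k = 0 then d.toNat else 0) (fun _ => 0) else 0

/-- `e^{(r)}_d(U) = S^{(r)}_{(1^d)}(U)`, zero for `d < 0`. -/
def eSV {R : Type*} [CommRing R] {N : ℕ} (U : Matrix (Fin N) (Fin N) R) (r : ℕ) (d : ℤ) : R :=
  if 0 ≤ d then SchurV U r (fun k => if k < d.toNat then 1 else 0) (fun _ => 0) else 0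

/-- The partition with Frobenius coordinates `(a|b)` (all 0-based as functions). -/
def frobP (p : ℕ) (a b : Fin p → ℕ) : ℕ → ℕ :=
  fun i => if h : i < p then a ⟨i, h⟩ + i + 1
    else (Finset.univ.filter fun j : Fin p => i < b j + (j : ℕ) + 1).card

/-- `f : ℕ → ℤ` is a partition of length `≤ B`. -/
def IsPartZ (B : ℕ) (f : ℕ → ℤ) : Prop :=
  (∀ i, f (i + 1) ≤ f i) ∧ (∀ i, 0 ≤ f i) ∧ (∀ i, B ≤ i → f i = 0)

/-- `lam/mu` is a skew partition (of length `≤ B`). -/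
def IsSkewZ (B : ℕ) (lam mu : ℕ → ℤ) : Prop :=
  IsPartZ B lam ∧ IsPartZ B mu ∧ ∀ i, mu i ≤ lam i

open Classical in
/-- `S^{(r)}_{λ/μ}(U)` with the convention that it is `0` if `λ/μ` is not a skew partition. -/
noncomputable def SchurVz {R : Type*} [CommRing R] {N : ℕ} (U : Matrix (Fin N) (Fin N) R)
    (r B : ℕ) (lam mu : ℕ → ℤ) : R :=
  if IsSkewZ B lam mu then SchurV U r (fun i => (lam i).toNat) (fun i => (mu i).toNat) else 0

open Classical in
/-- `S^{(r)}_{λ'/μ'}(U)` applied to the conjugates, with the zero convention. -/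
noncomputable def SchurVzConj {R : Type*} [CommRing R] {N : ℕ} (U : Matrix (Fin N) (Fin N) R)
    (r B : ℕ) (lam mu : ℕ → ℤ) : R :=
  if IsSkewZ B lam mu then
    SchurV U r (conjF (fun i => (lam i).toNat) B) (conjF (fun i => (mu i).toNat) B) else 0

/-- `lam/mu` is a skew partition (ℕ-valued version). -/
def IsSkewN (B : ℕ) (lam mu : ℕ → ℕ) : Prop :=
  (∀ i, lam (i + 1) ≤ lam i) ∧ (∀ i, mu (i + 1) ≤ mu i) ∧ (∀ i, mu i ≤ lam i) ∧
    (∀ i, B ≤ i → lam i = 0)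

open Classical in
noncomputable def SchurVn {R : Type*} [CommRing R] {N : ℕ} (U : Matrix (Fin N) (Fin N) R)
    (r B : ℕ) (lam mu : ℕ → ℕ) : R :=
  if IsSkewN B lam mu then SchurV U r lam mu else 0

/-- The rectangular partition `[m|n] = (n^m)`. -/
def rectP (m n : ℕ) : ℕ → ℕ := fun i => if i < m then n else 0

/-- `[m|n]^l = ((n+1)^l, n^{m-l})`. -/
def rectUpP (m n l : ℕ) : ℕ → ℕ := fun i => if i < l then n + 1 else if i < m then n else 0

/-- `[m|n]_k = (n^m, k)`. -/
def rectLowP (m n k : ℕ) : ℕ → ℕ := fun i => if i < m then n else if i = m then k else 0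

/-- `E + c·E_{t,t+1}` (indices 0-based). -/
def elemMat {R : Type*} [CommRing R] (N t : ℕ) (c : R) : Matrix (Fin N) (Fin N) R :=
  1 + Matrix.of (fun i j : Fin N => if (i : ℕ) = t ∧ (j : ℕ) = t + 1 then c else 0)

/-- `U = U_1 ⋯ U_M` with `U_k = (E + w_{k,1-r}E_{1,2}) ⋯ (E + w_{k,N-1-r}E_{N-1,N})`. -/
def UmatW {R : Type*} [CommRing R] (N M : ℕ) (r : ℤ) (w : ℕ → ℤ → R) :
    Matrix (Fin N) (Fin N) R :=
  ((List.range M).map fun k =>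
    ((List.range (N - 1)).map fun t => elemMat N t (w (k + 1) ((t : ℤ) + 1 - r))).prod).prod

/-- The partition `(m_1^{r_1} m_2^{r_2-r_1} ⋯ m_n^{r_n-r_{n-1}})` (corner data 0-based). -/
def stepPart (n : ℕ) (m rr : ℕ → ℕ) : ℕ → ℕ :=
  fun i =>
    if h : (((Finset.range n).filter fun j => i < rr j)).Nonempty then
      m (((Finset.range n).filter fun j => i < rr j).min' h)
    else 0

/-- `Add_{a,b}` (rows 1-based in `a`, `b`; the function argument is 0-based). -/
def AddOp (a b : ℕ) (k : ℕ → ℕ) : ℕ → ℕ := fun i =>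
  if i + 1 ≤ a then k i
  else if i + 1 = a + 1 then k (a - 1)
  else if i + 1 ≤ b + 1 then k (i - 1) + 1
  else k i

/-- `Rem_{a,b}`. -/
def RemOp (a b : ℕ) (k : ℕ → ℕ) : ℕ → ℕ := fun i =>
  if i + 1 < a then k i
  else if i + 1 ≤ b - 1 then k (i + 1) - 1
  else if i + 1 = b then k b
  else k i

/-- `op_{a 0, b 0} ∘ op_{a 1, b 1} ∘ ⋯ ∘ op_{a (t-1), b (t-1)}` applied to `k`. -/
def iterOp (op : ℕ → ℕ → (ℕ → ℕ) → ℕ → ℕ) (t : ℕ) (a b : ℕ → ℕ) (k : ℕ → ℕ) : ℕ → ℕ :=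
  (List.range t).foldr (fun i acc => op (a i) (b i) acc) k

/-- the `i`-th smallest element of a finite set of naturals (0-based). -/
def ascNth (s : Finset ℕ) (i : ℕ) : ℕ := (s.sort (· ≤ ·)).getD i 0

/-- The cells of the skew Young diagram `D(λ/μ)` (0-based, rows `< B`). -/
def cellsD (B : ℕ) (lam mu : ℕ → ℕ) : Finset (ℕ × ℕ) :=
  (Finset.range B ×ˢ Finset.range (lam 0 + 1)).filter fun p => mu p.1 ≤ p.2 ∧ p.2 < lam p.1

/-- Semistandardness: weakly increasing along rows, strictly increasing down columns. -/
def IsSSYT {M B : ℕ} {lam mu : ℕ → ℕ} (T : ↥(cellsD B lam mu) → Fin M) : Prop :=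
  (∀ c c' : ↥(cellsD B lam mu), c.val.1 = c'.val.1 → c.val.2 ≤ c'.val.2 → T c ≤ T c') ∧
  (∀ c c' : ↥(cellsD B lam mu), c.val.1 < c'.val.1 → c.val.2 = c'.val.2 → T c < T c')

open Classical in
/-- Sum over all semistandard tableaux of shape `λ/μ` with entries in `{1,…,M}` of
the product over cells `c` of `f (entry) c`. -/
noncomputable def tabSum {R : Type*} [CommRing R] (M B : ℕ) (lam mu : ℕ → ℕ)
    (f : ℕ → ℕ × ℕ → R) : R :=
  ∑ T ∈ Finset.univ.filter (fun T : ↥(cellsD B lam mu) → Fin M => IsSSYT T),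
    ∏ c : ↥(cellsD B lam mu), f ((T c : ℕ) + 1) c.val

/-- `M`-truncated Schur multiple zeta value for a general filling `s` of the diagram. -/
noncomputable def zetaTF (M B : ℕ) (lam mu : ℕ → ℕ) (s : ℕ × ℕ → ℂ) : ℂ :=
  tabSum M B lam mu fun k c => (k : ℂ) ^ (-(s c))

/-- `M`-truncated diagonally constant Schur multiple zeta value `ζ^M_{λ/μ}(a)`. -/
noncomputable def zetaT (M B : ℕ) (lam mu : ℕ → ℕ) (a : ℤ → ℂ) : ℂ :=
  zetaTF M B lam mu fun c => a ((c.2 : ℤ) - (c.1 : ℤ))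

open Classical in
/-- `ζ^M_{λ/μ}(a)` with the zero convention for non-skew shapes. -/
noncomputable def zetaZ (M B : ℕ) (lam mu : ℕ → ℤ) (a : ℤ → ℂ) : ℂ :=
  if IsSkewZ B lam mu then
    zetaT M B (fun i => (lam i).toNat) (fun i => (mu i).toNat) a else 0

open Classical in
/-- `ζ^M_{λ'/μ'}(a)` applied to conjugates, with the zero convention. -/
noncomputable def zetaZConj (M B : ℕ) (lam mu : ℕ → ℤ) (a : ℤ → ℂ) : ℂ :=
  if IsSkewZ B lam mu then
    zetaT M (lam 0).toNat (conjF (fun i => (lam i).toNat) B)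
      (conjF (fun i => (mu i).toNat) B) a
  else 0

open Classical in
/-- `M`-truncated multiple zeta-star value `ζ^{⋆,M}(s_0,…,s_{d-1})`. -/
noncomputable def zetaStarT (M d : ℕ) (s : ℕ → ℂ) : ℂ :=
  ∑ f ∈ Finset.univ.filter (fun f : Fin d → Fin M => ∀ i j : Fin d, i ≤ j → f i ≤ f j),
    ∏ i : Fin d, (((f i : ℕ) + 1 : ℕ) : ℂ) ^ (-(s i))

open Classical in
/-- `M`-truncated multiple zeta value `ζ^{M}(s_0,…,s_{d-1})`. -/
noncomputable def zetaMT (M d : ℕ) (s : ℕ → ℂ) : ℂ :=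
  ∑ f ∈ Finset.univ.filter (fun f : Fin d → Fin M => ∀ i j : Fin d, i < j → f i < f j),
    ∏ i : Fin d, (((f i : ℕ) + 1 : ℕ) : ℂ) ^ (-(s i))

/-- The Riemann zeta value `ζ(k) = Σ_{n ≥ 1} n^{-k}`. -/
noncomputable def zetaVal (k : ℕ) : ℂ := ∑' n : ℕ, ((n + 1 : ℕ) : ℂ) ^ (-(k : ℤ))

/-- `ζ^⋆(1,k) = Σ_{1 ≤ m ≤ n} m^{-1} n^{-k}`. -/
noncomputable def zetaStarOne (k : ℕ) : ℂ :=
  ∑' n : ℕ, (∑ m ∈ Finset.Icc 1 (n + 1), ((m : ℂ))⁻¹) * ((n + 1 : ℕ) : ℂ) ^ (-(k : ℤ))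

/-- Weyl-type formula for the ninth variation via a Gauss decomposition `X = L * D * U`. -/
theorem weyl_formula_ninth_variation {R : Type*} [CommRing R] {N : ℕ} (hN : 0 < N)
    (X L D U : Matrix (Fin N) (Fin N) R)
    (hL : LowerUni L) (hD : D.IsDiag) (hU : UpperUni U)
    (hX : X = L * D * U)
    (r : ℕ) (hr : r ≤ N) (lam : ℕ → ℕ)
    (hlam : ∀ i, lam (i + 1) ≤ lam i) (hlen : ∀ i, r ≤ i → lam i = 0)
    (hwid : lam 0 ≤ N - r) :
    Matrix.det (Matrix.of fun i j : Fin r => matExt X (i : ℕ) (maya lam r j)) =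
      (∏ i ∈ Finset.range r, matExt D i i) * SchurV U r lam (fun _ => 0) := by
  classical
  have anti : ∀ a b : ℕ, a ≤ b → lam b ≤ lam a := by
    intro a b h
    induction b, h using Nat.le_induction with
    | base => exact le_refl _
    | succ n hn ih => exact le_trans (hlam n) ih
  have hc : ∀ j : Fin r, maya lam r j < N := by
    intro j
    have h1 : lam (r - 1 - (j : ℕ)) ≤ N - r := le_trans (anti 0 _ (Nat.zero_le _)) hwid
    have h2 := j.isLt
    unfold maya
    omega
  have hrN : ∀ i : Fin r, (i : ℕ) < N := fun i => lt_of_lt_of_le i.isLt hr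
  set e : Fin r → Fin N := fun i => ⟨i, hrN i⟩ with he
  set c : Fin r → Fin N := fun j => ⟨maya lam r j, hc j⟩ with hcdef
  have einj : Function.Injective e := by
    intro a b hab
    exact Fin.ext (by simpa [he] using congrArg Fin.val hab)
  have hDU : ∀ (k j : Fin N), (D * U) k j = D k k * U k j := by
    intro k j
    rw [Matrix.mul_apply]
    rw [Finset.sum_eq_single k]
    · intro b _ hb
      rw [hD (Ne.symm hb), zero_mul]
    · intro h; exact absurd (Finset.mem_univ k) h
  have key : ∀ i j : Fin r, X (e i) (c j) = ∑ k : Fin r, L (e i) (e k) * (D * U) (e k) (c j) := by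
    intro i j
    have hX' : X (e i) (c j) = ∑ k : Fin N, L (e i) k * (D * U) k (c j) := by
      rw [hX, mul_assoc, Matrix.mul_apply]
    rw [hX']
    rw [show (∑ k : Fin r, L (e i) (e k) * (D * U) (e k) (c j))
        = ∑ k ∈ Finset.univ.map ⟨e, einj⟩, L (e i) k * (D * U) k (c j) from
      (Finset.sum_map Finset.univ ⟨e, einj⟩ (fun k => L (e i) k * (D * U) k (c j))).symm]
    symm
    apply Finset.sum_subset (Finset.subset_univ _)
    intro k _ hk
    have hkr : r ≤ (k : ℕ) := by
      by_contra h
      push_neg at h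
      exact hk (Finset.mem_map.mpr ⟨⟨k, h⟩, Finset.mem_univ _, Fin.ext rfl⟩)
    have hL0 : L (e i) k = 0 := hL.2 (e i) k (lt_of_lt_of_le i.isLt hkr)
    rw [hL0, zero_mul]
  have hfact : (Matrix.of fun i j : Fin r => matExt X (i : ℕ) (maya lam r j)) =
      (Matrix.of fun i j : Fin r => L (e i) (e j)) *
        (Matrix.of fun i j : Fin r => D (e i) (e i) * U (e i) (c j)) := by
    ext i j
    rw [Matrix.mul_apply]
    simp only [Matrix.of_apply]
    rw [show matExt X (i : ℕ) (maya lam r j) = X (e i) (c j) by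
      simp [matExt, hrN i, hc j, he, hcdef]]
    rw [key i j]
    exact Finset.sum_congr rfl fun k _ => by rw [hDU]
  rw [hfact, Matrix.det_mul]
  have hdetL : (Matrix.of fun i j : Fin r => L (e i) (e j)).det = 1 := by
    rw [Matrix.det_of_lowerTriangular _ (fun i j hij => by
      exact hL.2 (e i) (e j) (by simpa [he] using (OrderDual.toDual_lt_toDual.mp hij)))]
    simp [hL.1]
  rw [hdetL, one_mul]
  rw [show (Matrix.of fun i j : Fin r => D (e i) (e i) * U (e i) (c j)).det =
      (∏ i, D (e i) (e i)) * (Matrix.of fun i j : Fin r => U (e i) (c j)).det from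
      Matrix.det_mul_column _ _]
  congr 1
  · rw [← Fin.prod_univ_eq_prod_range (fun i => matExt D i i) r]
    exact Finset.prod_congr rfl fun k _ => by simp [matExt, hrN k, he]
  · unfold SchurV
    congr 1
    ext i j
    simp only [Matrix.of_apply]
    rw [show maya (fun _ => 0) r i = (i : ℕ) by simp [maya]]
    unfold matExt
    rw [dif_pos (hrN i), dif_pos (hc j)]
end

section
/- Tableau specialization (Lemma 2.6, identity (2.15)): Let R be a commutative ring, M, N positive integers, r, m integers, and w : {1,…,M} × ℤ → R. Define N×N matrices U_k := (E + w_{k,1−r}E_{1,2})(E + w_{k,2−r}E_{2,3})⋯(E + w_{k,N−1−r}E_{N−1,N}) for 1 ≤ k ≤ M, where E is the identity matrix and E_{t,t+1} the matrix unit, and put U := U_1 U_2 ⋯ U_M (a product in this order; U is upper unitriangular). Let λ ⊇ μ be partitions with ℓ(λ) ≤ r+m ≤ N and λ_1 ≤ N−(r+m). Then S^{(r+m)}_{λ/μ}(U) = Σ_{T ∈ SSYT_M(λ/μ)} ∏_{(i,j) ∈ D(λ/μ)} w_{T(i,j), m+j−i}. -/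
open Matrix BigOperators Finset Filter

namespace TSaux

variable {R : Type*} [CommRing R] {N : ℕ}

/-- entries of a single `U_k`-type factor as a function of ℕ indices -/
def entF (c : ℕ → R) (i j : ℕ) : R := if i ≤ j then ∏ t ∈ Finset.Ico i j, c t else 0

lemma elemProd_apply (c : ℕ → R) (s : ℕ) (i j : Fin N) :
    (((List.range s).map fun t => elemMat N t (c t)).prod) i j =
      if (i:ℕ) = (j:ℕ) then 1
      else if (i:ℕ) < (j:ℕ) ∧ (j:ℕ) ≤ s then ∏ t ∈ Finset.Ico (i:ℕ) (j:ℕ), c t else 0 := by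
  induction s generalizing i j with
  | zero =>
    simp only [List.range_zero, List.map_nil, List.prod_nil, Matrix.one_apply, Fin.ext_iff]
    split
    · rfl
    · rw [if_neg]; omega
  | succ s ih =>
    rw [List.range_succ, List.map_append, List.prod_append, List.map_cons, List.map_nil,
      List.prod_cons, List.prod_nil, mul_one]
    set P := ((List.range s).map fun t => elemMat N t (c t)).prod with hP
    rw [elemMat, mul_add, mul_one, Matrix.add_apply]
    have hPA : (P * Matrix.of (fun a b : Fin N =>
        if (a : ℕ) = s ∧ (b : ℕ) = s + 1 then c s else 0)) i j
        = if hj : (j:ℕ) = s + 1 then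
            P i ⟨s, by have := j.isLt; omega⟩ * c s
          else 0 := by
      rw [Matrix.mul_apply]
      split
      · next hj =>
        have hs : s < N := by have := j.isLt; omega
        rw [Finset.sum_eq_single (⟨s, hs⟩ : Fin N)]
        · simp [hj]
        · intro b _ hb
          rw [Matrix.of_apply, if_neg, mul_zero]
          intro ⟨h1, _⟩; exact hb (Fin.ext h1)
        · simp
      · next hj =>
        apply Finset.sum_eq_zero
        intro b _
        rw [Matrix.of_apply, if_neg, mul_zero]
        intro ⟨_, h2⟩; exact hj h2
    rw [hPA, ih i j]
    by_cases hj : (j:ℕ) = s + 1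
    · rw [dif_pos hj]
      have hs : s < N := by have := j.isLt; omega
      rw [ih i ⟨s, hs⟩]
      simp only []
      by_cases hieq : (i:ℕ) = s
      · rw [if_neg (by omega), if_neg (by omega), zero_add, if_pos hieq, one_mul,
          if_neg (by omega), if_pos (by omega), hj, hieq,
          Finset.prod_Ico_succ_top (by omega), Finset.Ico_self, Finset.prod_empty, one_mul]
      · by_cases hlt : (i:ℕ) < s
        · rw [if_neg (by omega), if_neg (by omega), zero_add, if_neg hieq,
            if_pos (⟨hlt, le_refl s⟩ : (i:ℕ) < s ∧ s ≤ s), if_neg (by omega),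
            if_pos (by omega), hj, Finset.prod_Ico_succ_top (by omega)]
        · by_cases hieq2 : (i:ℕ) = (j:ℕ)
          · rw [if_pos hieq2, if_neg hieq, if_neg (by omega), zero_mul, add_zero, if_pos hieq2]
          · rw [if_neg hieq2, if_neg (by omega), if_neg hieq, if_neg (by omega), zero_mul,
              add_zero, if_neg hieq2, if_neg (by omega)]
    · rw [dif_neg hj, add_zero]
      by_cases hieq : (i:ℕ) = (j:ℕ)
      · rw [if_pos hieq, if_pos hieq]
      · rw [if_neg hieq, if_neg hieq]
        by_cases hc : (i:ℕ) < (j:ℕ) ∧ (j:ℕ) ≤ s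
        · rw [if_pos hc, if_pos ⟨hc.1, by omega⟩]
        · rw [if_neg hc, if_neg (by omega)]

lemma elemProd_apply_full (hN : 0 < N) (c : ℕ → R) (i j : Fin N) :
    (((List.range (N-1)).map fun t => elemMat N t (c t)).prod) i j = entF c i j := by
  rw [elemProd_apply, entF]
  by_cases hieq : (i:ℕ) = (j:ℕ)
  · rw [if_pos hieq, if_pos (le_of_eq hieq), hieq, Finset.Ico_self, Finset.prod_empty]
  · rw [if_neg hieq]
    by_cases hlt : (i:ℕ) < (j:ℕ)
    · rw [if_pos ⟨hlt, by have := j.isLt; omega⟩, if_pos (le_of_lt hlt)]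
    · rw [if_neg (by omega), if_neg (by omega)]


open Classical in
noncomputable def smonoSet (q N : ℕ) : Finset (Fin q → Fin N) :=
  Finset.univ.filter StrictMono

lemma mem_smonoSet {g : Fin q → Fin N} : g ∈ smonoSet q N ↔ StrictMono g := by
  classical
  rw [smonoSet]
  simp only [Finset.mem_filter, Finset.mem_univ, true_and]

lemma cauchy_binet (A : Matrix (Fin q) (Fin N) R) (B : Matrix (Fin N) (Fin q) R) :
    (A * B).det = ∑ g ∈ smonoSet q N,
      (A.submatrix id g).det * (B.submatrix g id).det := by
  classical
  have h1 : (A * B).det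
      = ∑ f : Fin q → Fin N, (∏ j, B (f j) j) * (A.submatrix id f).det := by
    simp only [Matrix.det_apply', Matrix.mul_apply, Finset.prod_univ_sum,
      Fintype.piFinset_univ, Matrix.submatrix_apply, id_eq, Finset.mul_sum]
    rw [Finset.sum_comm]
    refine Finset.sum_congr rfl fun f _ => Finset.sum_congr rfl fun σ _ => ?_
    rw [Finset.prod_mul_distrib]
    ring
  rw [h1, ← Finset.sum_filter_add_sum_filter_not Finset.univ
    (fun f : Fin q → Fin N => Function.Injective f)]
  have h2 : ∑ f ∈ Finset.univ.filter
      (fun f : Fin q → Fin N => ¬ Function.Injective f),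
      (∏ j, B (f j) j) * (A.submatrix id f).det = 0 := by
    refine Finset.sum_eq_zero fun f hf => ?_
    obtain ⟨a, b, hab, hne⟩ := Function.not_injective_iff.mp (Finset.mem_filter.mp hf).2
    rw [Matrix.det_zero_of_column_eq hne (fun k => by simp [hab]), mul_zero]
  rw [h2, add_zero]
  have h3 : ∑ f ∈ Finset.univ.filter (fun f : Fin q → Fin N => Function.Injective f),
      (∏ j, B (f j) j) * (A.submatrix id f).det
      = ∑ p ∈ (smonoSet q N) ×ˢ (Finset.univ : Finset (Equiv.Perm (Fin q))),
        (∏ j, B (p.1 (p.2 j)) j) * (A.submatrix id (p.1 ∘ p.2)).det := by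
    refine (Finset.sum_nbij' (i := fun p : (Fin q → Fin N) × Equiv.Perm (Fin q) => p.1 ∘ p.2)
      (j := fun f => (f ∘ Tuple.sort f, (Tuple.sort f)⁻¹)) ?_ ?_ ?_ ?_ ?_).symm
    · intro p hp
      obtain ⟨hg, -⟩ := Finset.mem_product.mp hp
      simp only [Finset.mem_filter, Finset.mem_univ, true_and]
      exact ((mem_smonoSet.mp hg).injective).comp p.2.injective
    · intro f hf
      have hinj : Function.Injective f := (Finset.mem_filter.mp hf).2
      refine Finset.mem_product.mpr ⟨mem_smonoSet.mpr ?_, Finset.mem_univ _⟩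
      exact (Tuple.monotone_sort f).strictMono_of_injective
        (hinj.comp (Tuple.sort f).injective)
    · -- left inverse on product side
      rintro ⟨g, σ⟩ hp
      obtain ⟨hg, -⟩ := Finset.mem_product.mp hp
      have hg' : StrictMono g := mem_smonoSet.mp hg
      set τ := Tuple.sort (g ∘ σ) with hτ
      have hmono : Monotone ((g ∘ σ) ∘ τ) := Tuple.monotone_sort (g ∘ σ)
      have hστ : StrictMono (σ ∘ τ : Fin q → Fin q) := by
        have hmono' : Monotone (σ ∘ τ : Fin q → Fin q) := by
          intro x y hxy
          have h := hmono hxy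
          exact hg'.le_iff_le.mp h
        exact hmono'.strictMono_of_injective (σ.injective.comp τ.injective)
      have hid : (σ ∘ τ : Fin q → Fin q) = id := by
        refine (hστ.range_inj strictMono_id).mp ?_
        rw [Set.range_comp, Set.range_id]
        rw [Equiv.range_eq_univ, Set.image_univ, Equiv.range_eq_univ]
      have hmul : σ * τ = 1 := Equiv.ext fun x => by
        have := congrFun hid x
        simpa using this
      have hτval : τ = σ⁻¹ := eq_inv_of_mul_eq_one_right hmul
      have h1 : (g ∘ σ) ∘ (τ : Equiv.Perm (Fin q)) = g := by
        have : (g ∘ ⇑σ) ∘ ⇑τ = g ∘ (⇑σ ∘ ⇑τ) := rfl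
        rw [this, hid]
        rfl
      show ((g ∘ ⇑σ) ∘ ⇑τ, τ⁻¹) = (g, σ)
      rw [Prod.mk.injEq]
      exact ⟨h1, by rw [hτval, inv_inv]⟩
    · -- right inverse on injective side
      intro f hf
      show (f ∘ ⇑(Tuple.sort f)) ∘ ⇑(Tuple.sort f)⁻¹ = f
      funext x
      simp
    · rintro ⟨g, σ⟩ _
      rfl
  rw [h3, Finset.sum_product]
  refine Finset.sum_congr rfl fun g hg => ?_
  have key : ∀ σ : Equiv.Perm (Fin q),
      (A.submatrix id (g ∘ σ)).det
        = (((Equiv.Perm.sign σ : ℤ) : R)) * (A.submatrix id g).det := by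
    intro σ
    have h : A.submatrix id (g ∘ σ) = (A.submatrix id g).submatrix id σ := rfl
    rw [h, Matrix.det_permute']
  have hB : (B.submatrix g id).det
      = ∑ σ : Equiv.Perm (Fin q), (((Equiv.Perm.sign σ : ℤ) : R)) * ∏ j, B (g (σ j)) j := by
    rw [Matrix.det_apply']
    rfl
  rw [hB, Finset.mul_sum]
  refine Finset.sum_congr rfl fun σ _ => ?_
  rw [key σ]
  ring


lemma det_eq_zero_of_rect (Mq : Matrix (Fin q) (Fin q) R) (S T : Finset (Fin q))
    (hcard : q < S.card + T.card) (h : ∀ a ∈ S, ∀ b ∈ T, Mq a b = 0) : Mq.det = 0 := by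
  rw [Matrix.det_apply']
  refine Finset.sum_eq_zero fun σ _ => ?_
  have hx : ∃ x ∈ T, σ x ∈ S := by
    by_contra hc
    push_neg at hc
    have hsub : T.image σ ⊆ Sᶜ := by
      intro y hy
      obtain ⟨x, hxT, rfl⟩ := Finset.mem_image.mp hy
      simpa using hc x hxT
    have h1 : T.card = (T.image σ).card :=
      (Finset.card_image_of_injective T σ.injective).symm
    have h2 : (T.image σ).card ≤ Sᶜ.card := Finset.card_le_card hsub
    have h3 : Sᶜ.card = Fintype.card (Fin q) - S.card := Finset.card_compl S
    have h4 : S.card ≤ Fintype.card (Fin q) := Finset.card_le_univ S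
    rw [Fintype.card_fin] at h3 h4
    omega
  obtain ⟨x, hxT, hxS⟩ := hx
  have hz : ∏ i : Fin q, Mq (σ i) i = 0 :=
    Finset.prod_eq_zero (Finset.mem_univ x) (h _ hxS _ hxT)
  rw [hz, mul_zero]

/-- The minor of a one-row-insertion matrix. -/
def stripMat (c : ℕ → R) (ρ κ : Fin q → ℕ) : Matrix (Fin q) (Fin q) R :=
  Matrix.of fun a b => if ρ a ≤ κ b then ∏ t ∈ Finset.Ico (ρ a) (κ b), c t else 0

@[simp] lemma stripMat_apply (c : ℕ → R) (ρ κ : Fin q → ℕ) (a b : Fin q) :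
    stripMat c ρ κ a b = if ρ a ≤ κ b then ∏ t ∈ Finset.Ico (ρ a) (κ b), c t else 0 := rfl

def LmatD (c : ℕ → R) (ρ : Fin q → ℕ) : Matrix (Fin q) (Fin q) R :=
  Matrix.of fun a a' => if ρ a ≤ ρ a' then ∏ t ∈ Finset.Ico (ρ a) (ρ a'), c t else 0

@[simp] lemma LmatD_apply (c : ℕ → R) (ρ : Fin q → ℕ) (a a' : Fin q) :
    LmatD c ρ a a' = if ρ a ≤ ρ a' then ∏ t ∈ Finset.Ico (ρ a) (ρ a'), c t else 0 := rfl

def MmatD (c : ℕ → R) (ρ κ : Fin q → ℕ) : Matrix (Fin q) (Fin q) R :=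
  Matrix.of fun a b => if ρ a ≤ κ b ∧ ∀ h : (a:ℕ)+1 < q, κ b < ρ ⟨(a:ℕ)+1, h⟩ then
    ∏ t ∈ Finset.Ico (ρ a) (κ b), c t else 0

@[simp] lemma MmatD_apply (c : ℕ → R) (ρ κ : Fin q → ℕ) (a b : Fin q) :
    MmatD c ρ κ a b = if ρ a ≤ κ b ∧ ∀ h : (a:ℕ)+1 < q, κ b < ρ ⟨(a:ℕ)+1, h⟩ then
      ∏ t ∈ Finset.Ico (ρ a) (κ b), c t else 0 := rfl

/-- interleaving condition: `ρ b ≤ κ b < ρ (b+1)`. -/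
def Ilv (ρ κ : Fin q → ℕ) : Prop :=
  (∀ b, ρ b ≤ κ b) ∧ ∀ (b : Fin q) (h : (b:ℕ)+1 < q), κ b < ρ ⟨(b:ℕ)+1, h⟩

open Classical in
lemma det_stripMat (c : ℕ → R) (ρ κ : Fin q → ℕ) (hρ : StrictMono ρ) (hκ : StrictMono κ) :
    (stripMat c ρ κ).det =
      if Ilv ρ κ then ∏ b, ∏ t ∈ Finset.Ico (ρ b) (κ b), c t else 0 := by
  by_cases h1 : ∀ b, ρ b ≤ κ b
  swap
  · push_neg at h1
    obtain ⟨b₀, hb₀⟩ := h1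
    rw [if_neg (fun hc : Ilv ρ κ => absurd (hc.1 b₀) (by omega))]
    refine det_eq_zero_of_rect _ (Finset.Ici b₀) (Finset.Iic b₀) ?_ ?_
    · rw [Fin.card_Ici, Fin.card_Iic]
      have := b₀.isLt
      omega
    · intro a ha b hb
      have h2 : ρ b₀ ≤ ρ a := hρ.monotone (Finset.mem_Ici.mp ha)
      have h3 : κ b ≤ κ b₀ := hκ.monotone (Finset.mem_Iic.mp hb)
      exact if_neg (by omega)
  · have hfact : stripMat c ρ κ = LmatD c ρ * MmatD c ρ κ := by
      ext a b
      rw [Matrix.mul_apply]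
      simp only [stripMat_apply, LmatD_apply, MmatD_apply]
      by_cases hab : ρ a ≤ κ b
      · set F := Finset.univ.filter (fun a' : Fin q => ρ a' ≤ κ b) with hF
        have haF : a ∈ F := by simp [hF, hab]
        have hFne : F.Nonempty := ⟨a, haF⟩
        set a₀ := F.max' hFne with ha₀
        have ha₀F : a₀ ∈ F := F.max'_mem hFne
        have ha₀κ : ρ a₀ ≤ κ b := (Finset.mem_filter.mp ha₀F).2
        have haa₀ : a ≤ a₀ := F.le_max' a haF
        have hρa₀ : ρ a ≤ ρ a₀ := hρ.monotone haa₀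
        have ha₀max : ∀ h : (a₀:ℕ)+1 < q, κ b < ρ ⟨(a₀:ℕ)+1, h⟩ := by
          intro h
          by_contra hc
          push_neg at hc
          have hmem : (⟨(a₀:ℕ)+1, h⟩ : Fin q) ∈ F := by simp [hF, hc]
          have hle := F.le_max' _ hmem
          rw [← ha₀] at hle
          have : (a₀:ℕ)+1 ≤ (a₀:ℕ) := hle
          omega
        have hcond : ρ a₀ ≤ κ b ∧ ∀ h : (a₀:ℕ)+1 < q, κ b < ρ ⟨(a₀:ℕ)+1, h⟩ :=
          ⟨ha₀κ, ha₀max⟩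
        rw [Finset.sum_eq_single a₀]
        · rw [if_pos hρa₀, if_pos hcond, if_pos hab,
            Finset.prod_Ico_consecutive c hρa₀ ha₀κ]
        · intro a' _ ha'
          by_cases hL1 : ρ a ≤ ρ a'
          · by_cases hL2 : ρ a' ≤ κ b
            · have ha'F : a' ∈ F := by simp [hF, hL2]
              have ha'lt : a' < a₀ := lt_of_le_of_ne (F.le_max' a' ha'F) ha'
              have hlt : (a':ℕ)+1 < q := by
                have h1' : ((a':ℕ)+1) ≤ (a₀:ℕ) := ha'lt
                have := a₀.isLt
                omega
              have hle2 : ρ ⟨(a':ℕ)+1, hlt⟩ ≤ ρ a₀ := by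
                apply hρ.monotone
                show ((a':ℕ)+1) ≤ (a₀:ℕ)
                exact ha'lt
              rw [if_pos hL1, if_neg, mul_zero]
              rintro ⟨-, hcond2⟩
              have := hcond2 hlt
              omega
            · rw [if_pos hL1, if_neg
                (fun hc : ρ a' ≤ κ b ∧ ∀ h : (a':ℕ)+1 < q, κ b < ρ ⟨(a':ℕ)+1, h⟩ =>
                  hL2 hc.1), mul_zero]
          · rw [if_neg hL1, zero_mul]
        · intro ha
          exact absurd (Finset.mem_univ a₀) ha
      · rw [if_neg hab]
        refine (Finset.sum_eq_zero fun a' _ => ?_).symm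
        by_cases hL1 : ρ a ≤ ρ a'
        · rw [if_pos hL1, if_neg, mul_zero]
          rintro ⟨hc, -⟩
          omega
        · rw [if_neg hL1, zero_mul]
    have hdetL : (LmatD c ρ).det = 1 := by
      have hut : (LmatD c ρ).BlockTriangular id := by
        intro i j hij
        have : ρ j < ρ i := hρ hij
        simp only [LmatD_apply]
        exact if_neg (by omega)
      rw [Matrix.det_of_upperTriangular hut]
      refine Finset.prod_eq_one fun a _ => ?_
      simp [Finset.Ico_self]
    by_cases h2 : ∀ (b : Fin q) (h : (b:ℕ)+1 < q), κ b < ρ ⟨(b:ℕ)+1, h⟩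
    · rw [if_pos ⟨h1, h2⟩, hfact, Matrix.det_mul, hdetL, one_mul]
      have hdiag : MmatD c ρ κ
          = Matrix.diagonal (fun b => ∏ t ∈ Finset.Ico (ρ b) (κ b), c t) := by
        ext a b
        simp only [MmatD_apply]
        rcases lt_trichotomy a b with hab | hab | hab
        · rw [Matrix.diagonal_apply_ne _ (ne_of_lt hab), if_neg]
          rintro ⟨-, hcond⟩
          have hlt : (a:ℕ)+1 < q := by
            have h3 : (a:ℕ)+1 ≤ (b:ℕ) := hab
            have := b.isLt
            omega
          have h4 : ρ ⟨(a:ℕ)+1, hlt⟩ ≤ κ ⟨(a:ℕ)+1, hlt⟩ := h1 _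
          have h5 : κ ⟨(a:ℕ)+1, hlt⟩ ≤ κ b := by
            apply hκ.monotone
            show (a:ℕ)+1 ≤ (b:ℕ)
            exact hab
          have := hcond hlt
          omega
        · subst hab
          rw [Matrix.diagonal_apply_eq, if_pos ⟨h1 a, h2 a⟩]
        · rw [Matrix.diagonal_apply_ne _ (ne_of_gt hab), if_neg]
          rintro ⟨hcond, -⟩
          have hlt : (b:ℕ)+1 < q := by
            have h3 : (b:ℕ)+1 ≤ (a:ℕ) := hab
            have := a.isLt
            omega
          have h4 : κ b < ρ ⟨(b:ℕ)+1, hlt⟩ := h2 b hlt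
          have h5 : ρ ⟨(b:ℕ)+1, hlt⟩ ≤ ρ a := by
            apply hρ.monotone
            show (b:ℕ)+1 ≤ (a:ℕ)
            exact hab
          omega
      rw [hdiag, Matrix.det_diagonal]
    · push_neg at h2
      obtain ⟨b₀, hlt, hb₀⟩ := h2
      rw [if_neg (fun hc : Ilv ρ κ => absurd (hc.2 b₀ hlt) (by omega)), hfact,
        Matrix.det_mul, hdetL, one_mul]
      refine det_eq_zero_of_rect _ (Finset.Iic b₀) (Finset.Ici b₀) ?_ ?_
      · rw [Fin.card_Ici, Fin.card_Iic]
        have := b₀.isLt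
        omega
      · intro a ha b hb
        have haq : (a:ℕ)+1 < q := by
          have h3 : (a:ℕ) ≤ (b₀:ℕ) := Fin.le_def.mp (Finset.mem_Iic.mp ha)
          omega
        have h4 : ρ ⟨(a:ℕ)+1, haq⟩ ≤ ρ ⟨(b₀:ℕ)+1, hlt⟩ := by
          apply hρ.monotone
          show (a:ℕ)+1 ≤ (b₀:ℕ)+1
          have h3 : (a:ℕ) ≤ (b₀:ℕ) := Fin.le_def.mp (Finset.mem_Iic.mp ha)
          omega
        have h5 : κ b₀ ≤ κ b := hκ.monotone (Finset.mem_Ici.mp hb)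
        simp only [MmatD_apply]
        rw [if_neg]
        rintro ⟨-, hcond⟩
        have := hcond haq
        omega


lemma antitone_of_step {lam : ℕ → ℕ} (h : ∀ i, lam (i+1) ≤ lam i) :
    ∀ {i j}, i ≤ j → lam j ≤ lam i := by
  intro i j hij
  induction hij with
  | refl => exact le_rfl
  | step _ ih => exact le_trans (h _) ih

lemma maya_strictMono {lam : ℕ → ℕ} (h : ∀ i, lam (i+1) ≤ lam i) (rm : ℕ) :
    StrictMono (maya lam rm) := by
  intro a b hab
  unfold maya
  have hab' : (a:ℕ) < (b:ℕ) := hab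
  have h1 : lam (rm-1-(a:ℕ)) ≤ lam (rm-1-(b:ℕ)) := antitone_of_step h (by omega)
  omega

lemma maya_lt {lam : ℕ → ℕ} {rm : ℕ} (h : ∀ i, lam (i+1) ≤ lam i)
    (hwid : lam 0 ≤ N - rm) (hrmN : rm ≤ N) (a : Fin rm) : maya lam rm a < N := by
  have h1 : lam (rm-1-(a:ℕ)) ≤ lam 0 := antitone_of_step h (Nat.zero_le _)
  have h2 := a.isLt
  unfold maya
  omega

/-- upper triangular (0 below diagonal) -/
def UTp (U : Matrix (Fin N) (Fin N) R) : Prop :=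
  ∀ i j : Fin N, (j:ℕ) < (i:ℕ) → U i j = 0

lemma utp_one : UTp (1 : Matrix (Fin N) (Fin N) R) := by
  intro i j hij
  exact Matrix.one_apply_ne (by intro h; rw [h] at hij; omega)

lemma utp_mul {A B : Matrix (Fin N) (Fin N) R} (hA : UTp A) (hB : UTp B) : UTp (A * B) := by
  intro i j hij
  rw [Matrix.mul_apply]
  refine Finset.sum_eq_zero fun l _ => ?_
  by_cases hl : (l:ℕ) < (i:ℕ)
  · rw [hA i l hl, zero_mul]
  · rw [hB l j (by omega), mul_zero]

lemma utp_listProd (L : List (Matrix (Fin N) (Fin N) R)) (h : ∀ A ∈ L, UTp A) :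
    UTp L.prod := by
  induction L with
  | nil => simpa using utp_one
  | cons A L ih =>
    rw [List.prod_cons]
    exact utp_mul (h A List.mem_cons_self) (ih fun B hB => h B (List.mem_cons_of_mem A hB))

lemma utp_elemMat (t : ℕ) (c : R) : UTp (elemMat N t c) := by
  intro i j hij
  rw [elemMat, Matrix.add_apply, Matrix.one_apply_ne (by intro h; rw [h] at hij; omega),
    Matrix.of_apply, if_neg, add_zero]
  rintro ⟨h1, h2⟩
  omega

lemma utp_UmatW (M : ℕ) (r : ℤ) (w : ℕ → ℤ → R) : UTp (UmatW N M r w) := by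
  apply utp_listProd
  intro A hA
  rw [List.mem_map] at hA
  obtain ⟨k, -, rfl⟩ := hA
  apply utp_listProd
  intro B hB
  rw [List.mem_map] at hB
  obtain ⟨t, -, rfl⟩ := hB
  exact utp_elemMat t _

/-- the partition associated with a strictly increasing `Fin rm`-tuple -/
def nuOf (rm : ℕ) (g : Fin rm → ℕ) : ℕ → ℕ :=
  fun i => if h : i < rm then g ⟨rm-1-i, by omega⟩ - (rm-1-i) else 0

lemma smono_ge {rm : ℕ} {g : Fin rm → ℕ} (hg : StrictMono g) :
    ∀ b : Fin rm, (b:ℕ) ≤ g b := by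
  have H : ∀ k (hk : k < rm), k ≤ g ⟨k, hk⟩ := by
    intro k
    induction k with
    | zero => intro hk; exact Nat.zero_le _
    | succ k ih =>
      intro hk
      have h1 : k ≤ g ⟨k, by omega⟩ := ih (by omega)
      have h2 : g ⟨k, by omega⟩ < g ⟨k+1, hk⟩ := hg (by rw [Fin.lt_def]; simp)
      omega
  intro b
  exact H b.val b.isLt

lemma nuOf_maya {rm : ℕ} {g : Fin rm → ℕ} (hg : StrictMono g) (a : Fin rm) :
    maya (nuOf rm g) rm a = g a := by
  have ha := a.isLt
  unfold maya nuOf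
  rw [dif_pos (by omega : rm - 1 - (a:ℕ) < rm)]
  have hidx : ∀ hpf : rm-1-(rm-1-(a:ℕ)) < rm, (⟨rm-1-(rm-1-(a:ℕ)), hpf⟩ : Fin rm) = a := by
    intro hpf
    apply Fin.ext
    simp only [Fin.val_mk]
    omega
  rw [hidx]
  have := smono_ge hg a
  omega

lemma nuOf_step {rm : ℕ} {g : Fin rm → ℕ} (hg : StrictMono g) (i : ℕ) :
    nuOf rm g (i+1) ≤ nuOf rm g i := by
  unfold nuOf
  by_cases h1 : i + 1 < rm
  · rw [dif_pos h1, dif_pos (by omega)]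
    have hlt : (⟨rm-1-(i+1), by omega⟩ : Fin rm) < (⟨rm-1-i, by omega⟩ : Fin rm) := by
      rw [Fin.lt_def]; simp only []; omega
    have h2 := hg hlt
    have h3 := smono_ge hg (⟨rm-1-(i+1), by omega⟩ : Fin rm)
    simp only [] at h2 h3 ⊢
    omega
  · rw [dif_neg h1]
    exact Nat.zero_le _

lemma nuOf_zero_of_ge {rm : ℕ} (g : Fin rm → ℕ) {i : ℕ} (h : rm ≤ i) : nuOf rm g i = 0 :=
  dif_neg (by omega)

lemma nuOf_wid {rm : ℕ} {g : Fin rm → ℕ} (hgN : ∀ b, g b < N) (hrmN : rm ≤ N) :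
    nuOf rm g 0 ≤ N - rm := by
  unfold nuOf
  by_cases h : 0 < rm
  · rw [dif_pos h]
    have := hgN ⟨rm-1-0, by omega⟩
    omega
  · rw [dif_neg h]
    omega


lemma nuOf_apply {rm : ℕ} (g : Fin rm → ℕ) {i : ℕ} (hi : i < rm) (hpf : rm-1-i < rm) :
    nuOf rm g i = g ⟨rm-1-i, hpf⟩ - (rm-1-i) := by
  rw [nuOf, dif_pos hi]

-- (a) interleaving translation
lemma ilv_iff {rm : ℕ} (lam : ℕ → ℕ) (hlam : ∀ i, lam (i+1) ≤ lam i)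
    (hlen : ∀ i, rm ≤ i → lam i = 0) (g : Fin rm → ℕ) (hg : StrictMono g) :
    Ilv g (fun b => maya lam rm b) ↔
      ((∀ i, nuOf rm g i ≤ lam i) ∧ (∀ i, lam (i+1) ≤ nuOf rm g i)) := by
  constructor
  · rintro ⟨h1, h2⟩
    constructor
    · intro i
      by_cases hi : i < rm
      · have hpf : rm - 1 - i < rm := by omega
        rw [nuOf_apply g hi hpf]
        have hb := h1 ⟨rm-1-i, hpf⟩
        simp only [maya, Fin.val_mk] at hb
        rw [(by omega : rm - 1 - (rm-1-i) = i)] at hb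
        omega
      · rw [nuOf, dif_neg hi]
        exact Nat.zero_le _
    · intro i
      by_cases hi : i + 1 < rm
      · have hpf : rm - 1 - i < rm := by omega
        rw [nuOf_apply g (by omega) hpf]
        have hb1 : rm - 1 - (i+1) < rm := by omega
        have hb2 : (rm - 1 - (i+1)) + 1 < rm := by omega
        have hb := h2 ⟨rm-1-(i+1), hb1⟩ hb2
        simp only [maya, Fin.val_mk] at hb
        rw [(by omega : rm - 1 - (rm-1-(i+1)) = i + 1)] at hb
        have hidx : (⟨(rm-1-(i+1)) + 1, hb2⟩ : Fin rm) = ⟨rm-1-i, hpf⟩ :=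
          Fin.ext (by simp only [Fin.val_mk]; omega)
        rw [hidx] at hb
        have hge := smono_ge hg ⟨rm-1-i, hpf⟩
        rw [Fin.val_mk] at hge
        omega
      · rw [hlen (i+1) (by omega)]
        exact Nat.zero_le _
  · rintro ⟨h1, h2⟩
    constructor
    · intro b
      have hb := b.isLt
      have hpf : rm - 1 - (rm - 1 - (b:ℕ)) < rm := by omega
      have h1' := h1 (rm - 1 - (b:ℕ))
      rw [nuOf_apply g (by omega) hpf] at h1'
      have hidx : (⟨rm-1-(rm-1-(b:ℕ)), hpf⟩ : Fin rm) = b :=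
        Fin.ext (by simp only [Fin.val_mk]; omega)
      rw [hidx] at h1'
      show g b ≤ maya lam rm b
      rw [maya]
      have hge := smono_ge hg b
      omega
    · intro b hb1
      have hb := b.isLt
      have h2' := h2 (rm - 2 - (b:ℕ))
      rw [(by omega : rm - 2 - (b:ℕ) + 1 = rm - 1 - (b:ℕ))] at h2'
      have hpf : rm - 1 - (rm - 2 - (b:ℕ)) < rm := by omega
      rw [nuOf_apply g (by omega) hpf] at h2'
      have hidx : (⟨rm-1-(rm-2-(b:ℕ)), hpf⟩ : Fin rm) = ⟨(b:ℕ)+1, hb1⟩ :=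
        Fin.ext (by simp only [Fin.val_mk]; omega)
      rw [hidx, (by omega : rm - 1 - (rm - 2 - (b:ℕ)) = (b:ℕ)+1)] at h2'
      have hge := smono_ge hg ⟨(b:ℕ)+1, hb1⟩
      rw [Fin.val_mk] at hge
      show maya lam rm b < g ⟨(b:ℕ)+1, hb1⟩
      rw [maya]
      omega

-- (b) weight translation
lemma weight_trans (c : ℕ → R) (nu lam : ℕ → ℕ) (rm : ℕ) :
    ∏ b : Fin rm, ∏ t ∈ Finset.Ico (maya nu rm b) (maya lam rm b), c t
      = ∏ i ∈ Finset.range rm, ∏ j ∈ Finset.Ico (nu i) (lam i), c (j + (rm-1-i)) := by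
  have h0 : ∏ b : Fin rm, ∏ t ∈ Finset.Ico (maya nu rm b) (maya lam rm b), c t
      = ∏ b ∈ Finset.range rm,
          ∏ t ∈ Finset.Ico (nu (rm-1-b) + b) (lam (rm-1-b) + b), c t := by
    rw [← Fin.prod_univ_eq_prod_range]
    exact Finset.prod_congr rfl fun b _ => rfl
  rw [h0, ← Finset.prod_range_reflect]
  refine Finset.prod_congr rfl fun i hi => ?_
  rw [Finset.mem_range] at hi
  rw [(by omega : rm - 1 - (rm - 1 - i) = i)]
  rw [← Finset.map_add_right_Ico (nu i) (lam i) (rm-1-i), Finset.prod_map]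
  exact Finset.prod_congr rfl fun j _ => rfl

-- (c) vanishing when μ ⊄ λ
lemma schurV_eq_zero {rm : ℕ} (U : Matrix (Fin N) (Fin N) R) (hU : UTp U)
    (lam mu : ℕ → ℕ) (hlam : ∀ i, lam (i+1) ≤ lam i) (hmu : ∀ i, mu (i+1) ≤ mu i)
    (hlamN : ∀ a : Fin rm, maya lam rm a < N) (hmuN : ∀ a : Fin rm, maya mu rm a < N)
    (i₀ : ℕ) (hi₀ : i₀ < rm) (hlt : lam i₀ < mu i₀) :
    SchurV U rm lam mu = 0 := by
  rw [SchurV]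
  have hpf : rm - 1 - i₀ < rm := by omega
  set b₀ : Fin rm := ⟨rm-1-i₀, hpf⟩ with hb₀
  have hρκ : maya lam rm b₀ < maya mu rm b₀ := by
    simp only [maya, hb₀, Fin.val_mk]
    rw [(by omega : rm - 1 - (rm - 1 - i₀) = i₀)]
    omega
  refine det_eq_zero_of_rect _ (Finset.Ici b₀) (Finset.Iic b₀) ?_ ?_
  · rw [Fin.card_Ici, Fin.card_Iic]
    have := b₀.isLt
    omega
  · intro a ha b hb
    have h2 : maya mu rm b₀ ≤ maya mu rm a :=
      (maya_strictMono hmu rm).monotone (Finset.mem_Ici.mp ha)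
    have h3 : maya lam rm b ≤ maya lam rm b₀ :=
      (maya_strictMono hlam rm).monotone (Finset.mem_Iic.mp hb)
    rw [Matrix.of_apply, matExt, dif_pos (hmuN a), dif_pos (hlamN b)]
    exact hU _ _ (show maya lam rm b < maya mu rm a by omega)

-- (d1) SchurV of the identity matrix
lemma schurV_one {rm : ℕ} (lam mu : ℕ → ℕ) (hlam : ∀ i, lam (i+1) ≤ lam i)
    (hmu : ∀ i, mu (i+1) ≤ mu i)
    (hlamN : ∀ a : Fin rm, maya lam rm a < N) (hmuN : ∀ a : Fin rm, maya mu rm a < N) :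
    SchurV (1 : Matrix (Fin N) (Fin N) R) rm lam mu
      = if ∀ i < rm, lam i = mu i then 1 else 0 := by
  by_cases h : ∀ i < rm, lam i = mu i
  · rw [if_pos h, SchurV]
    have hmm : ∀ b : Fin rm, maya lam rm b = maya mu rm b := by
      intro b
      rw [maya, maya, h (rm-1-(b:ℕ)) (by have := b.isLt; omega)]
    have hM : (Matrix.of fun i j : Fin rm =>
        matExt (1 : Matrix (Fin N) (Fin N) R) (maya mu rm i) (maya lam rm j))
        = (1 : Matrix (Fin rm) (Fin rm) R) := by
      ext a b
      rw [Matrix.of_apply, matExt, dif_pos (hmuN a), dif_pos (hlamN b)]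
      by_cases hab : a = b
      · subst hab
        have heq : (⟨maya lam rm a, hlamN a⟩ : Fin N) = ⟨maya mu rm a, hmuN a⟩ :=
          Fin.ext (hmm a)
        rw [heq, Matrix.one_apply_eq, Matrix.one_apply_eq]
      · have hne : (⟨maya mu rm a, hmuN a⟩ : Fin N) ≠ ⟨maya lam rm b, hlamN b⟩ := by
          intro hc
          apply hab
          have hc' : maya mu rm a = maya lam rm b := congrArg Fin.val hc
          rw [hmm b] at hc'
          exact (maya_strictMono hmu rm).injective hc'
        rw [Matrix.one_apply_ne hne, Matrix.one_apply_ne hab]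
    rw [hM, Matrix.det_one]
  · rw [if_neg h]
    push_neg at h
    obtain ⟨i₀, hi₀, hne⟩ := h
    rcases Nat.lt_or_ge (lam i₀) (mu i₀) with hlt | hge
    · exact schurV_eq_zero 1 utp_one lam mu hlam hmu hlamN hmuN i₀ hi₀ hlt
    · have hlt : mu i₀ < lam i₀ := by omega
      rw [SchurV]
      have hpf : rm - 1 - i₀ < rm := by omega
      set b₀ : Fin rm := ⟨rm-1-i₀, hpf⟩ with hb₀
      have hρκ : maya mu rm b₀ < maya lam rm b₀ := by
        simp only [maya, hb₀, Fin.val_mk]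
        rw [(by omega : rm - 1 - (rm - 1 - i₀) = i₀)]
        omega
      refine det_eq_zero_of_rect _ (Finset.Iic b₀) (Finset.Ici b₀) ?_ ?_
      · rw [Fin.card_Ici, Fin.card_Iic]
        have := b₀.isLt
        omega
      · intro a ha b hb
        have h2 : maya mu rm a ≤ maya mu rm b₀ :=
          (maya_strictMono hmu rm).monotone (Finset.mem_Iic.mp ha)
        have h3 : maya lam rm b₀ ≤ maya lam rm b :=
          (maya_strictMono hlam rm).monotone (Finset.mem_Ici.mp hb)
        rw [Matrix.of_apply, matExt, dif_pos (hmuN a), dif_pos (hlamN b)]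
        refine Matrix.one_apply_ne fun hc => ?_
        have hc' : maya mu rm a = maya lam rm b := congrArg Fin.val hc
        omega



lemma mem_cellsD_iff {B : ℕ} {lam mu : ℕ → ℕ} (hlam : ∀ i, lam (i+1) ≤ lam i) {p : ℕ×ℕ} :
    p ∈ cellsD B lam mu ↔ p.1 < B ∧ mu p.1 ≤ p.2 ∧ p.2 < lam p.1 := by
  simp only [cellsD, Finset.mem_filter, Finset.mem_product, Finset.mem_range]
  constructor
  · rintro ⟨⟨h1, -⟩, h3, h4⟩
    exact ⟨h1, h3, h4⟩
  · rintro ⟨h1, h3, h4⟩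
    have h5 : lam p.1 ≤ lam 0 := antitone_of_step hlam (Nat.zero_le p.1)
    exact ⟨⟨h1, by omega⟩, h3, h4⟩

lemma mem_cellsD_mk {B : ℕ} {lam mu : ℕ → ℕ} (hlam : ∀ i, lam (i+1) ≤ lam i) {i j : ℕ} :
    (i, j) ∈ cellsD B lam mu ↔ i < B ∧ mu i ≤ j ∧ j < lam i :=
  mem_cellsD_iff hlam

lemma prod_cellsD {B : ℕ} {lam mu : ℕ → ℕ} (hlam : ∀ i, lam (i+1) ≤ lam i)
    (F : ℕ×ℕ → R) :
    ∏ p ∈ cellsD B lam mu, F p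
      = ∏ i ∈ Finset.range B, ∏ j ∈ Finset.Ico (mu i) (lam i), F (i,j) := by
  classical
  rw [cellsD, Finset.prod_filter, Finset.prod_product]
  refine Finset.prod_congr rfl fun i hi => ?_
  rw [Finset.mem_range] at hi
  rw [← Finset.prod_filter]
  congr 1
  ext j
  simp only [Finset.mem_filter, Finset.mem_range, Finset.mem_Ico]
  have h5 : lam i ≤ lam 0 := antitone_of_step hlam (Nat.zero_le i)
  omega

lemma dc_eq_Ico (a b : ℕ) (s : Finset ℕ) (hs : s ⊆ Finset.Ico a b)
    (hdc : ∀ j' j, a ≤ j' → j' ≤ j → j ∈ s → j' ∈ s) :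
    s = Finset.Ico a (a + s.card) := by
  rcases Finset.eq_empty_or_nonempty s with he | hne
  · rw [he]
    simp
  · set mx := s.max' hne with hmx
    have hsub2 : s ⊆ Finset.Ico a (mx+1) := fun j hj => Finset.mem_Ico.mpr
      ⟨(Finset.mem_Ico.mp (hs hj)).1, Nat.lt_succ_of_le (s.le_max' j hj)⟩
    have hsub3 : Finset.Ico a (mx+1) ⊆ s := fun j hj => by
      rw [Finset.mem_Ico] at hj
      exact hdc j mx hj.1 (by omega) (s.max'_mem hne)
    have heq : s = Finset.Ico a (mx+1) := Finset.Subset.antisymm hsub2 hsub3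
    have hax : a ≤ mx := (Finset.mem_Ico.mp (hs (s.max'_mem hne))).1
    rw [heq, Nat.card_Ico]
    congr 1
    omega

section Lev

variable {M rm : ℕ} {lam mu : ℕ → ℕ}

open Classical in
noncomputable def rowSetD (M rm : ℕ) (lam mu : ℕ → ℕ)
    (T : ↥(cellsD rm lam mu) → Fin (M+1)) (i : ℕ) : Finset ℕ :=
  (Finset.Ico (mu i) (lam i)).filter
    (fun j => ∃ hm : (i,j) ∈ cellsD rm lam mu, ((T ⟨(i,j),hm⟩ : ℕ) < M))

noncomputable def levN (M rm : ℕ) (lam mu : ℕ → ℕ)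
    (T : ↥(cellsD rm lam mu) → Fin (M+1)) : ℕ → ℕ :=
  fun i => mu i + (rowSetD M rm lam mu T i).card

lemma rowSetD_eq (hlam : ∀ i, lam (i+1) ≤ lam i)
    {T : ↥(cellsD rm lam mu) → Fin (M+1)} (hT : IsSSYT T) (i : ℕ) (hi : i < rm) :
    rowSetD M rm lam mu T i = Finset.Ico (mu i) (levN M rm lam mu T i) := by
  classical
  rw [levN]
  apply dc_eq_Ico (a := mu i) (b := lam i) _ (Finset.filter_subset _ _)
  intro j' j haj' hj'j hj
  simp only [rowSetD, Finset.mem_filter, Finset.mem_Ico] at hj ⊢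
  obtain ⟨⟨hj1, hj2⟩, hm, hv⟩ := hj
  have hm' : (i, j') ∈ cellsD rm lam mu :=
    (mem_cellsD_mk hlam).mpr ⟨hi, haj', by omega⟩
  refine ⟨⟨haj', by omega⟩, hm', ?_⟩
  have hle := hT.1 ⟨(i,j'), hm'⟩ ⟨(i,j), hm⟩ rfl hj'j
  have hle' : (T ⟨(i,j'), hm'⟩ : ℕ) ≤ (T ⟨(i,j), hm⟩ : ℕ) := hle
  omega

lemma levN_key (hlam : ∀ i, lam (i+1) ≤ lam i)
    {T : ↥(cellsD rm lam mu) → Fin (M+1)} (hT : IsSSYT T)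
    {i j : ℕ} (hm : (i,j) ∈ cellsD rm lam mu) :
    ((T ⟨(i,j),hm⟩ : ℕ) < M) ↔ j < levN M rm lam mu T i := by
  classical
  obtain ⟨hi, hj1, hj2⟩ := (mem_cellsD_mk hlam).mp hm
  have hmem : j ∈ rowSetD M rm lam mu T i ↔ ((T ⟨(i,j),hm⟩ : ℕ) < M) := by
    simp only [rowSetD, Finset.mem_filter, Finset.mem_Ico]
    constructor
    · rintro ⟨-, hm2, hv⟩
      exact hv
    · intro hv
      exact ⟨⟨hj1, hj2⟩, hm, hv⟩
  rw [← hmem, rowSetD_eq hlam hT i hi, Finset.mem_Ico]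
  exact ⟨fun h => h.2, fun h => ⟨hj1, h⟩⟩

lemma levN_le (hsub : ∀ i, mu i ≤ lam i)
    (T : ↥(cellsD rm lam mu) → Fin (M+1)) (i : ℕ) :
    levN M rm lam mu T i ≤ lam i := by
  have h1 : (rowSetD M rm lam mu T i).card ≤ (Finset.Ico (mu i) (lam i)).card :=
    Finset.card_le_card (Finset.filter_subset _ _)
  rw [Nat.card_Ico] at h1
  rw [levN]
  have := hsub i
  omega

lemma levN_ge (T : ↥(cellsD rm lam mu) → Fin (M+1)) (i : ℕ) :
    mu i ≤ levN M rm lam mu T i := Nat.le_add_right _ _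

lemma levN_high (hlen : ∀ i, rm ≤ i → lam i = 0)
    (T : ↥(cellsD rm lam mu) → Fin (M+1)) {i : ℕ} (hi : rm ≤ i) :
    levN M rm lam mu T i = mu i := by
  rw [levN]
  simp only [rowSetD, hlen i hi]
  simp

lemma levN_step (hlam : ∀ i, lam (i+1) ≤ lam i) (hmu : ∀ i, mu (i+1) ≤ mu i)
    (hsub : ∀ i, mu i ≤ lam i) (hlen : ∀ i, rm ≤ i → lam i = 0)
    {T : ↥(cellsD rm lam mu) → Fin (M+1)} (hT : IsSSYT T) (i : ℕ) :
    levN M rm lam mu T (i+1) ≤ levN M rm lam mu T i := by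
  by_cases hi : i + 1 < rm
  · by_contra hc
    push_neg at hc
    have h1 := levN_ge T (i+1)
    have h2 := levN_ge T i
    have h3 := levN_le hsub T (i+1)
    have hmui := hmu i
    have hlami := hlam i
    set j := levN M rm lam mu T (i+1) - 1 with hj
    have hm' : (i+1, j) ∈ cellsD rm lam mu :=
      (mem_cellsD_mk hlam).mpr ⟨hi, by omega, by omega⟩
    have hm : (i, j) ∈ cellsD rm lam mu :=
      (mem_cellsD_mk hlam).mpr ⟨by omega, by omega, by omega⟩
    have hv' : (T ⟨(i+1,j), hm'⟩ : ℕ) < M := (levN_key hlam hT hm').mpr (by omega)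
    have hv : ¬ ((T ⟨(i,j), hm⟩ : ℕ) < M) := fun h => by
      have := (levN_key hlam hT hm).mp h
      omega
    have hcol : T ⟨(i,j), hm⟩ < T ⟨(i+1,j), hm'⟩ :=
      hT.2 ⟨(i,j), hm⟩ ⟨(i+1,j), hm'⟩ (Nat.lt_succ_self i) rfl
    have hcol' : (T ⟨(i,j), hm⟩ : ℕ) < (T ⟨(i+1,j), hm'⟩ : ℕ) := hcol
    omega
  · have h1 := levN_high hlen T (show rm ≤ i + 1 by omega)
    have h2 := levN_ge T i
    have h3 := hmu i
    omega

lemma levN_strip (hlam : ∀ i, lam (i+1) ≤ lam i) (hmu : ∀ i, mu (i+1) ≤ mu i)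
    (hlen : ∀ i, rm ≤ i → lam i = 0)
    {T : ↥(cellsD rm lam mu) → Fin (M+1)} (hT : IsSSYT T) (i : ℕ) :
    lam (i+1) ≤ levN M rm lam mu T i := by
  by_cases hi : i + 1 < rm
  · by_contra hc
    push_neg at hc
    have h2 := levN_ge T i
    have hmui := hmu i
    have hlami := hlam i
    set j := levN M rm lam mu T i with hj
    have hm : (i, j) ∈ cellsD rm lam mu :=
      (mem_cellsD_mk hlam).mpr ⟨by omega, by omega, by omega⟩
    have hm' : (i+1, j) ∈ cellsD rm lam mu :=
      (mem_cellsD_mk hlam).mpr ⟨hi, by omega, by omega⟩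
    have hv : ¬ ((T ⟨(i,j), hm⟩ : ℕ) < M) := fun h => by
      have := (levN_key hlam hT hm).mp h
      omega
    have hcol : T ⟨(i,j), hm⟩ < T ⟨(i+1,j), hm'⟩ :=
      hT.2 ⟨(i,j), hm⟩ ⟨(i+1,j), hm'⟩ (Nat.lt_succ_self i) rfl
    have hcol' : (T ⟨(i,j), hm⟩ : ℕ) < (T ⟨(i+1,j), hm'⟩ : ℕ) := hcol
    have hb : (T ⟨(i+1,j), hm'⟩ : ℕ) < M + 1 := (T ⟨(i+1,j), hm'⟩).isLt
    omega
  · rw [hlen (i+1) (by omega)]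
    exact Nat.zero_le _

end Lev

lemma maya_eq_iff {rm : ℕ} (p q : ℕ → ℕ) :
    (∀ b : Fin rm, maya p rm b = maya q rm b) ↔ ∀ i < rm, p i = q i := by
  constructor
  · intro h i hi
    have hpf : rm - 1 - i < rm := by omega
    have hb := h ⟨rm-1-i, hpf⟩
    simp only [maya, Fin.val_mk] at hb
    rw [(by omega : rm - 1 - (rm-1-i) = i)] at hb
    omega
  · intro h b
    have hb := b.isLt
    simp only [maya]
    rw [h _ (by omega)]

lemma prod_subtype_filter {α : Type*} {s : Finset α} (Q : α → Prop) [DecidablePred Q]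
    (F : α → R) :
    ∏ c ∈ Finset.univ.filter (fun c : ↥s => Q c.val), F c.val
      = ∏ p ∈ s.filter Q, F p := by
  rw [Finset.prod_filter, Finset.prod_filter, Finset.univ_eq_attach]
  exact Finset.prod_attach s (fun p => if Q p then F p else 1)


section Phi

variable {M rm : ℕ} {lam mu ν : ℕ → ℕ}

/-- extend a tableau of shape ν/μ by `M`-entries on λ/ν -/
def PhiT (hdown : ∀ p : ℕ×ℕ, p ∈ cellsD rm lam mu → p.2 < ν p.1 → p ∈ cellsD rm ν mu)
    (T' : ↥(cellsD rm ν mu) → Fin M) (c : ↥(cellsD rm lam mu)) : Fin (M+1) :=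
  if h : c.val.2 < ν c.val.1 then (T' ⟨c.val, hdown _ c.2 h⟩).castSucc else Fin.last M

lemma PhiT_pos (hdown : ∀ p : ℕ×ℕ, p ∈ cellsD rm lam mu → p.2 < ν p.1 → p ∈ cellsD rm ν mu)
    (T' : ↥(cellsD rm ν mu) → Fin M) {c : ↥(cellsD rm lam mu)} (h : c.val.2 < ν c.val.1) :
    PhiT hdown T' c = (T' ⟨c.val, hdown _ c.2 h⟩).castSucc := dif_pos h

lemma PhiT_neg (hdown : ∀ p : ℕ×ℕ, p ∈ cellsD rm lam mu → p.2 < ν p.1 → p ∈ cellsD rm ν mu)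
    (T' : ↥(cellsD rm ν mu) → Fin M) {c : ↥(cellsD rm lam mu)} (h : ¬ c.val.2 < ν c.val.1) :
    PhiT hdown T' c = Fin.last M := dif_neg h

lemma PhiT_val_lt (hdown : ∀ p : ℕ×ℕ, p ∈ cellsD rm lam mu → p.2 < ν p.1 → p ∈ cellsD rm ν mu)
    (T' : ↥(cellsD rm ν mu) → Fin M) (c : ↥(cellsD rm lam mu)) :
    ((PhiT hdown T' c : ℕ) < M) ↔ c.val.2 < ν c.val.1 := by
  by_cases h : c.val.2 < ν c.val.1
  · rw [PhiT_pos hdown T' h]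
    simp only [Fin.coe_castSucc]
    exact ⟨fun _ => h, fun _ => (T' _).isLt⟩
  · rw [PhiT_neg hdown T' h]
    simp only [Fin.val_last]
    exact ⟨fun hc => absurd hc (lt_irrefl M), fun hc => absurd hc h⟩

end Phi

open Classical in
lemma tabSum_succ {rm : ℕ} (hrmN : rm ≤ N) (M : ℕ) (lam mu : ℕ → ℕ)
    (hlam : ∀ i, lam (i+1) ≤ lam i) (hmu : ∀ i, mu (i+1) ≤ mu i)
    (hsub : ∀ i, mu i ≤ lam i) (hlen : ∀ i, rm ≤ i → lam i = 0) (hwid : lam 0 ≤ N - rm)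
    (f : ℕ → ℕ × ℕ → R) :
    tabSum (M+1) rm lam mu f
      = ∑ g ∈ smonoSet rm N,
          (if (∀ i, mu i ≤ nuOf rm (fun b => (g b : ℕ)) i)
              ∧ (∀ i, nuOf rm (fun b => (g b : ℕ)) i ≤ lam i)
              ∧ (∀ i, lam (i+1) ≤ nuOf rm (fun b => (g b : ℕ)) i)
           then tabSum M rm (nuOf rm (fun b => (g b : ℕ))) mu f *
             ∏ i ∈ Finset.range rm, ∏ j ∈ Finset.Ico (nuOf rm (fun b => (g b : ℕ)) i) (lam i),
               f (M+1) (i, j)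
           else 0) := by
  classical
  have hmu0 : ∀ i, rm ≤ i → mu i = 0 := fun i hi => by
    have h1 := hsub i
    have h2 := hlen i hi
    omega
  set gOfT : (↥(cellsD rm lam mu) → Fin (M+1)) → (Fin rm → Fin N) :=
    fun T b => ⟨min (maya (levN M rm lam mu T) rm b) (N-1), by
      have hb := b.isLt
      omega⟩ with hgOfT
  have hmayaN : ∀ (T : ↥(cellsD rm lam mu) → Fin (M+1)), ∀ b : Fin rm,
      maya (levN M rm lam mu T) rm b < N := by
    intro T b
    have h1 : maya (levN M rm lam mu T) rm b ≤ maya lam rm b := by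
      simp only [maya]
      have := levN_le hsub T (rm - 1 - (b:ℕ))
      omega
    exact lt_of_le_of_lt h1 (maya_lt hlam hwid hrmN b)
  have hgval : ∀ (T : ↥(cellsD rm lam mu) → Fin (M+1)) (b : Fin rm),
      (gOfT T b : ℕ) = maya (levN M rm lam mu T) rm b := by
    intro T b
    show min (maya (levN M rm lam mu T) rm b) (N-1) = maya (levN M rm lam mu T) rm b
    have := hmayaN T b
    omega
  have hgmap : ∀ T ∈ Finset.univ.filter
      (fun T : ↥(cellsD rm lam mu) → Fin (M+1) => IsSSYT T), gOfT T ∈ smonoSet rm N := by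
    intro T hT
    have hT1 : IsSSYT T := (Finset.mem_filter.mp hT).2
    rw [mem_smonoSet]
    intro b b' hbb'
    have hsm := maya_strictMono (levN_step hlam hmu hsub hlen hT1) rm hbb'
    show (gOfT T b : ℕ) < (gOfT T b' : ℕ)
    rw [hgval T b, hgval T b']
    exact hsm
  rw [tabSum, ← Finset.sum_fiberwise_of_maps_to hgmap]
  refine Finset.sum_congr rfl fun g hg => ?_
  have hgsm : StrictMono g := mem_smonoSet.mp hg
  have hgvsm : StrictMono (fun b : Fin rm => (g b : ℕ)) := fun a b hab => hgsm hab
  -- fiber characterization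
  have hfib : ∀ (T : ↥(cellsD rm lam mu) → Fin (M+1)), IsSSYT T →
      (gOfT T = g ↔ ∀ i, levN M rm lam mu T i = nuOf rm (fun b => (g b : ℕ)) i) := by
    intro T hT
    constructor
    · intro he i
      by_cases hi : i < rm
      · have hall : ∀ b : Fin rm, maya (levN M rm lam mu T) rm b
            = maya (nuOf rm (fun b => (g b : ℕ))) rm b := by
          intro b
          rw [nuOf_maya hgvsm b, ← hgval T b, he]
        exact (maya_eq_iff _ _).mp hall i hi
      · rw [levN_high hlen T (by omega), nuOf_zero_of_ge _ (by omega), hmu0 i (by omega)]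
    · intro he
      funext b
      apply Fin.ext
      rw [hgval T b]
      have h1 : maya (levN M rm lam mu T) rm b
          = maya (nuOf rm (fun b => (g b : ℕ))) rm b :=
        (maya_eq_iff _ _).mpr (fun i _ => he i) b
      rw [h1, nuOf_maya hgvsm b]
  by_cases hOK : (∀ i, mu i ≤ nuOf rm (fun b => (g b : ℕ)) i)
      ∧ (∀ i, nuOf rm (fun b => (g b : ℕ)) i ≤ lam i)
      ∧ (∀ i, lam (i+1) ≤ nuOf rm (fun b => (g b : ℕ)) i)
  swap
  · rw [if_neg hOK]
    refine Finset.sum_eq_zero fun T hT => ?_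
    rw [Finset.mem_filter] at hT
    have hT1 : IsSSYT T := (Finset.mem_filter.mp hT.1).2
    have hT2 := (hfib T hT1).mp hT.2
    exact absurd ⟨fun i => hT2 i ▸ levN_ge T i,
      fun i => hT2 i ▸ levN_le hsub T i,
      fun i => hT2 i ▸ levN_strip hlam hmu hlen hT1 i⟩ hOK
  · obtain ⟨hOK1, hOK2, hOK3⟩ := hOK
    rw [if_pos ⟨hOK1, hOK2, hOK3⟩, tabSum, Finset.sum_mul]
    set ν : ℕ → ℕ := nuOf rm (fun b => (g b : ℕ)) with hνdef
    have hν1 : ∀ i, ν (i+1) ≤ ν i := fun i => nuOf_step hgvsm i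
    have hmemUp : ∀ p : ℕ×ℕ, p ∈ cellsD rm ν mu → p ∈ cellsD rm lam mu := by
      intro p hp
      rw [mem_cellsD_iff hν1] at hp
      exact (mem_cellsD_iff hlam).mpr ⟨hp.1, hp.2.1, lt_of_lt_of_le hp.2.2 (hOK2 p.1)⟩
    have hmemDown : ∀ p : ℕ×ℕ, p ∈ cellsD rm lam mu → p.2 < ν p.1 → p ∈ cellsD rm ν mu := by
      intro p hp h2
      rw [mem_cellsD_iff hlam] at hp
      exact (mem_cellsD_iff hν1).mpr ⟨hp.1, hp.2.1, h2⟩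
    -- SSYT property of PhiT
    have hPhiSSYT : ∀ (T' : ↥(cellsD rm ν mu) → Fin M), IsSSYT T' →
        IsSSYT (PhiT hmemDown T') := by
      intro T' hT'
      constructor
      · intro c d h1 h2
        by_cases hc : c.val.2 < ν c.val.1
        · by_cases hd : d.val.2 < ν d.val.1
          · rw [PhiT_pos hmemDown T' hc, PhiT_pos hmemDown T' hd]
            exact Fin.castSucc_le_castSucc_iff.mpr
              (hT'.1 ⟨c.val, hmemDown _ c.2 hc⟩ ⟨d.val, hmemDown _ d.2 hd⟩ h1 h2)
          · rw [PhiT_neg hmemDown T' hd]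
            exact Fin.le_last _
        · by_cases hd : d.val.2 < ν d.val.1
          · exfalso
            have hEq : ν c.val.1 = ν d.val.1 := congrArg ν h1
            omega
          · rw [PhiT_neg hmemDown T' hc, PhiT_neg hmemDown T' hd]
      · intro c d h1 h2
        have hcelld := (mem_cellsD_iff hlam).mp d.2
        have hlammono : lam d.val.1 ≤ lam (c.val.1+1) := antitone_of_step hlam (by omega)
        have hOK3c := hOK3 c.val.1
        have hcpos : c.val.2 < ν c.val.1 := by omega
        rw [PhiT_pos hmemDown T' hcpos]
        by_cases hd : d.val.2 < ν d.val.1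
        · rw [PhiT_pos hmemDown T' hd]
          exact Fin.castSucc_lt_castSucc_iff.mpr
            (hT'.2 ⟨c.val, hmemDown _ c.2 hcpos⟩ ⟨d.val, hmemDown _ d.2 hd⟩ h1 h2)
        · rw [PhiT_neg hmemDown T' hd]
          exact Fin.castSucc_lt_last _
    -- level partition of PhiT is ν
    have hPhiLev : ∀ (T' : ↥(cellsD rm ν mu) → Fin M), IsSSYT T' → ∀ i,
        levN M rm lam mu (PhiT hmemDown T') i = ν i := by
      intro T' hT' i
      by_cases hi : i < rm
      · have hrs : rowSetD M rm lam mu (PhiT hmemDown T') i = Finset.Ico (mu i) (ν i) := by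
          ext j
          simp only [rowSetD, Finset.mem_filter, Finset.mem_Ico]
          constructor
          · rintro ⟨⟨h1, h2⟩, hm, hv⟩
            rw [PhiT_val_lt] at hv
            exact ⟨h1, hv⟩
          · rintro ⟨h1, h2⟩
            have hm : (i,j) ∈ cellsD rm lam mu :=
              (mem_cellsD_mk hlam).mpr ⟨hi, h1, lt_of_lt_of_le h2 (hOK2 i)⟩
            refine ⟨⟨h1, lt_of_lt_of_le h2 (hOK2 i)⟩, hm, ?_⟩
            rw [PhiT_val_lt]
            exact h2
        rw [levN, hrs, Nat.card_Ico]
        have := hOK1 i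
        omega
      · rw [levN_high hlen _ (by omega), hmu0 i (by omega), hνdef,
          nuOf_zero_of_ge _ (by omega)]
    -- the bijection
    refine Finset.sum_bij'
      (i := fun (T : ↥(cellsD rm lam mu) → Fin (M+1)) hT =>
        fun c' : ↥(cellsD rm ν mu) =>
          (⟨(T ⟨c'.val, hmemUp _ c'.2⟩ : ℕ), by
            have hT1 : IsSSYT T := (Finset.mem_filter.mp (Finset.mem_filter.mp hT).1).2
            have hT2 := (hfib T hT1).mp (Finset.mem_filter.mp hT).2
            have hc' := (mem_cellsD_iff hν1).mp c'.2
            have hkey : ((T ⟨c'.val, hmemUp _ c'.2⟩ : ℕ) < M)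
                ↔ c'.val.2 < levN M rm lam mu T c'.val.1 :=
              levN_key hlam hT1 (hmemUp _ c'.2)
            rw [hkey, hT2 c'.val.1]
            exact hc'.2.2⟩ : Fin M))
      (j := fun T' _ => PhiT hmemDown T')
      ?_ ?_ ?_ ?_ ?_
    · -- hi : Psi lands in SSYT
      intro T hT
      have hT1 : IsSSYT T := (Finset.mem_filter.mp (Finset.mem_filter.mp hT).1).2
      refine Finset.mem_filter.mpr ⟨Finset.mem_univ _, ?_⟩
      constructor
      · intro c' d' h1 h2
        exact hT1.1 ⟨c'.val, hmemUp _ c'.2⟩ ⟨d'.val, hmemUp _ d'.2⟩ h1 h2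
      · intro c' d' h1 h2
        exact hT1.2 ⟨c'.val, hmemUp _ c'.2⟩ ⟨d'.val, hmemUp _ d'.2⟩ h1 h2
    · -- hj : PhiT lands in the fiber
      intro T' hT'
      have hT'1 : IsSSYT T' := (Finset.mem_filter.mp hT').2
      refine Finset.mem_filter.mpr ⟨Finset.mem_filter.mpr
        ⟨Finset.mem_univ _, hPhiSSYT T' hT'1⟩, ?_⟩
      exact (hfib _ (hPhiSSYT T' hT'1)).mpr (hPhiLev T' hT'1)
    · -- left inverse : PhiT ∘ Psi = id
      intro T hT
      have hT1 : IsSSYT T := (Finset.mem_filter.mp (Finset.mem_filter.mp hT).1).2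
      have hT2 := (hfib T hT1).mp (Finset.mem_filter.mp hT).2
      funext c
      show PhiT hmemDown _ c = T c
      by_cases h : c.val.2 < ν c.val.1
      · rw [PhiT_pos hmemDown _ h]
        apply Fin.ext
        simp only [Fin.coe_castSucc]
      · rw [PhiT_neg hmemDown _ h]
        apply Fin.ext
        have hkey : ((T c : ℕ) < M) ↔ c.val.2 < levN M rm lam mu T c.val.1 :=
          levN_key hlam hT1 c.2
        rw [hT2 c.val.1] at hkey
        have hb : (T c : ℕ) < M + 1 := (T c).isLt
        simp only [Fin.val_last]
        omega
    · -- right inverse : Psi ∘ PhiT = id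
      intro T' hT'
      funext c'
      apply Fin.ext
      have hcond : (⟨c'.val, hmemUp _ c'.2⟩ : ↥(cellsD rm lam mu)).val.2
          < ν (⟨c'.val, hmemUp _ c'.2⟩ : ↥(cellsD rm lam mu)).val.1 :=
        ((mem_cellsD_iff hν1).mp c'.2).2.2
      show ((PhiT hmemDown T' ⟨c'.val, hmemUp _ c'.2⟩ : Fin (M+1)) : ℕ) = (T' c' : ℕ)
      rw [PhiT_pos hmemDown T' hcond]
      simp only [Fin.coe_castSucc]
    · -- values
      intro T hT
      have hT1 : IsSSYT T := (Finset.mem_filter.mp (Finset.mem_filter.mp hT).1).2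
      have hT2 := (hfib T hT1).mp (Finset.mem_filter.mp hT).2
      rw [← Finset.prod_filter_mul_prod_filter_not Finset.univ
        (fun c : ↥(cellsD rm lam mu) => c.val.2 < ν c.val.1)]
      congr 1
      · -- cells of ν/μ
        refine Finset.prod_bij'
          (i := fun c hc => (⟨c.val, hmemDown _ c.2 (Finset.mem_filter.mp hc).2⟩ :
            ↥(cellsD rm ν mu)))
          (j := fun c' _ => (⟨c'.val, hmemUp _ c'.2⟩ : ↥(cellsD rm lam mu)))
          ?_ ?_ ?_ ?_ ?_
        · intro c hc
          exact Finset.mem_univ _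
        · intro c' _
          exact Finset.mem_filter.mpr ⟨Finset.mem_univ _, ((mem_cellsD_iff hν1).mp c'.2).2.2⟩
        · intro c hc
          exact Subtype.ext rfl
        · intro c' _
          exact Subtype.ext rfl
        · intro c hc
          have harg2 : (⟨c.val, hmemUp _ (hmemDown _ c.2 (Finset.mem_filter.mp hc).2)⟩ :
              ↥(cellsD rm lam mu)) = c := Subtype.ext rfl
          exact congrArg (fun x => f ((T x : ℕ) + 1) c.val) harg2.symm
      · -- cells of λ/ν carry entry M
        have hstep1 : ∀ c ∈ Finset.univ.filter
            (fun c : ↥(cellsD rm lam mu) => ¬ c.val.2 < ν c.val.1),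
            f ((T c : ℕ) + 1) c.val = f (M+1) c.val := by
          intro c hc
          have hP := (Finset.mem_filter.mp hc).2
          have hkey : ((T c : ℕ) < M) ↔ c.val.2 < levN M rm lam mu T c.val.1 :=
            levN_key hlam hT1 c.2
          rw [hT2 c.val.1] at hkey
          have hb : (T c : ℕ) < M + 1 := (T c).isLt
          have hTM : (T c : ℕ) = M := by omega
          rw [hTM]
        rw [Finset.prod_congr rfl hstep1,
          prod_subtype_filter (fun p : ℕ×ℕ => ¬ p.2 < ν p.1) (f (M+1))]
        have hset : (cellsD rm lam mu).filter (fun p : ℕ×ℕ => ¬ p.2 < ν p.1)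
            = cellsD rm lam ν := by
          ext p
          rw [Finset.mem_filter, mem_cellsD_iff hlam,
            mem_cellsD_iff (lam := lam) (mu := ν) hlam]
          constructor
          · rintro ⟨⟨h1, h2, h3⟩, h4⟩
            exact ⟨h1, Nat.not_lt.mp h4, h3⟩
          · rintro ⟨h1, h2, h3⟩
            exact ⟨⟨h1, le_trans (hOK1 p.1) h2, h3⟩, Nat.not_lt.mpr h2⟩
        rw [hset, prod_cellsD hlam (f (M+1))]


lemma cellsD_eq_empty {rm : ℕ} {lam mu : ℕ → ℕ} (h : ∀ i < rm, lam i = mu i) :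
    cellsD rm lam mu = ∅ := by
  ext p
  simp only [cellsD, Finset.mem_filter, Finset.mem_product, Finset.mem_range,
    Finset.notMem_empty, iff_false]
  rintro ⟨⟨hp1, hp2⟩, hmu', hlam'⟩
  rw [h p.1 hp1] at hlam'
  omega

lemma tabSum_zeroM {rm : ℕ} (lam mu : ℕ → ℕ) (hlam : ∀ i, lam (i+1) ≤ lam i)
    (hsub : ∀ i, mu i ≤ lam i) (f : ℕ → ℕ × ℕ → R) :
    tabSum 0 rm lam mu f = if ∀ i < rm, lam i = mu i then 1 else 0 := by
  classical
  by_cases h : ∀ i < rm, lam i = mu i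
  · rw [if_pos h, tabSum]
    have hempty := cellsD_eq_empty h
    haveI hIE : IsEmpty (↥(cellsD rm lam mu)) := by
      refine ⟨fun c => ?_⟩
      exact (Finset.eq_empty_iff_forall_notMem.mp hempty) c.1 c.2
    have hfil : (Finset.univ.filter (fun T : ↥(cellsD rm lam mu) → Fin 0 => IsSSYT T))
        = Finset.univ :=
      Finset.filter_true_of_mem fun T _ => ⟨fun c => isEmptyElim c, fun c => isEmptyElim c⟩
    rw [hfil]
    have hprod : ∀ T : ↥(cellsD rm lam mu) → Fin 0,
        ∏ c : ↥(cellsD rm lam mu), f ((T c : ℕ)+1) c.val = 1 := fun T => by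
      rw [Finset.univ_eq_empty, Finset.prod_empty]
    rw [Finset.sum_congr rfl fun T _ => hprod T, Finset.sum_const, Finset.card_univ,
      Fintype.card_unique, one_smul]
  · rw [if_neg h, tabSum]
    push_neg at h
    obtain ⟨i₀, hi₀, hne⟩ := h
    have hlt : mu i₀ < lam i₀ := lt_of_le_of_ne (hsub i₀) (fun e => hne e.symm)
    have hmem : (i₀, mu i₀) ∈ cellsD rm lam mu := by
      simp only [cellsD, Finset.mem_filter, Finset.mem_product, Finset.mem_range]
      have h0 : lam i₀ ≤ lam 0 := antitone_of_step hlam (Nat.zero_le _)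
      exact ⟨⟨hi₀, by omega⟩, le_refl _, hlt⟩
    haveI : IsEmpty (↥(cellsD rm lam mu) → Fin 0) :=
      ⟨fun T => (T ⟨(i₀, mu i₀), hmem⟩).elim0⟩
    rw [Finset.univ_eq_empty, Finset.filter_empty, Finset.sum_empty]

lemma det_minor_mul {q : ℕ} (U V : Matrix (Fin N) (Fin N) R) (ρ κ : Fin q → Fin N) :
    (Matrix.of fun a b : Fin q => (U * V) (ρ a) (κ b)).det
      = ∑ g ∈ smonoSet q N,
          (Matrix.of fun a b : Fin q => U (ρ a) (g b)).det *
          (Matrix.of fun a b : Fin q => V (g a) (κ b)).det := by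
  have hAB : (U.submatrix ρ id) * (V.submatrix id κ)
      = Matrix.of fun a b : Fin q => (U * V) (ρ a) (κ b) := by
    ext a b
    simp [Matrix.mul_apply, Matrix.submatrix_apply]
  rw [← hAB, cauchy_binet]
  rfl

lemma main_aux (hN : 0 < N) (r m : ℤ) (w : ℕ → ℤ → R) (rm : ℕ)
    (hrm : (rm : ℤ) = r + m) (hrmN : rm ≤ N) :
    ∀ M : ℕ, ∀ lam mu : ℕ → ℕ,
      (∀ i, lam (i+1) ≤ lam i) → (∀ i, mu (i+1) ≤ mu i) → (∀ i, mu i ≤ lam i) →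
      (∀ i, rm ≤ i → lam i = 0) → lam 0 ≤ N - rm →
      SchurV (UmatW N M r w) rm lam mu
        = tabSum M rm lam mu (fun k c => w k (m + (c.2 : ℤ) - (c.1 : ℤ))) := by
  intro M
  induction M with
  | zero =>
    intro lam mu hlam hmu hsub hlen hwid
    have hlamN : ∀ a : Fin rm, maya lam rm a < N := maya_lt hlam hwid hrmN
    have hmuN : ∀ a : Fin rm, maya mu rm a < N :=
      maya_lt hmu (le_trans (hsub 0) hwid) hrmN
    have hU : UmatW N 0 r w = 1 := by simp [UmatW]
    rw [hU, schurV_one lam mu hlam hmu hlamN hmuN, tabSum_zeroM lam mu hlam hsub _]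
  | succ M ih =>
    intro lam mu hlam hmu hsub hlen hwid
    classical
    have hlamN : ∀ a : Fin rm, maya lam rm a < N := maya_lt hlam hwid hrmN
    have hmuN : ∀ a : Fin rm, maya mu rm a < N :=
      maya_lt hmu (le_trans (hsub 0) hwid) hrmN
    set ck : ℕ → R := fun t => w (M+1) ((t:ℤ)+1-r) with hck
    have hsplit : UmatW N (M+1) r w
        = UmatW N M r w * ((List.range (N-1)).map fun t => elemMat N t (ck t)).prod := by
      simp only [UmatW, List.range_succ, List.map_append, List.prod_append, List.map_cons,
        List.map_nil, List.prod_cons, List.prod_nil, mul_one, hck]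
    rw [SchurV]
    have hmat : (Matrix.of fun a b : Fin rm =>
        matExt (UmatW N (M+1) r w) (maya mu rm a) (maya lam rm b))
        = Matrix.of fun a b : Fin rm =>
            (UmatW N M r w * ((List.range (N-1)).map fun t => elemMat N t (ck t)).prod)
              ((fun a : Fin rm => (⟨maya mu rm a, hmuN a⟩ : Fin N)) a)
              ((fun b : Fin rm => (⟨maya lam rm b, hlamN b⟩ : Fin N)) b) := by
      ext a b
      rw [Matrix.of_apply, Matrix.of_apply, matExt, dif_pos (hmuN a), dif_pos (hlamN b),
        hsplit]
    rw [hmat, det_minor_mul,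
      tabSum_succ hrmN M lam mu hlam hmu hsub hlen hwid
        (fun k c => w k (m + (c.2 : ℤ) - (c.1 : ℤ)))]
    refine Finset.sum_congr rfl fun g hg => ?_
    have hg' : StrictMono g := mem_smonoSet.mp hg
    have hgval : StrictMono (fun b : Fin rm => (g b : ℕ)) := fun a b hab => hg' hab
    have hB : (Matrix.of fun a b : Fin rm =>
        (((List.range (N-1)).map fun t => elemMat N t (ck t)).prod) (g a)
          (⟨maya lam rm b, hlamN b⟩ : Fin N))
        = stripMat ck (fun a => (g a : ℕ)) (fun b => maya lam rm b) := by
      ext a b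
      rw [Matrix.of_apply, elemProd_apply_full hN ck (g a) ⟨maya lam rm b, hlamN b⟩]
      rfl
    rw [hB, det_stripMat ck _ _ hgval (maya_strictMono hlam rm)]
    have hgb : ∀ b : Fin rm, maya (nuOf rm (fun b => (g b : ℕ))) rm b = (g b : ℕ) :=
      fun b => nuOf_maya hgval b
    have hνN : ∀ a : Fin rm, maya (nuOf rm (fun b => (g b : ℕ))) rm a < N := fun a => by
      rw [hgb a]
      exact (g a).isLt
    have hAd : (Matrix.of fun a b : Fin rm => (UmatW N M r w)
          (⟨maya mu rm a, hmuN a⟩ : Fin N) (g b)).det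
        = SchurV (UmatW N M r w) rm (nuOf rm (fun b => (g b : ℕ))) mu := by
      rw [SchurV]
      congr 1
      ext a b
      rw [Matrix.of_apply, Matrix.of_apply, matExt, dif_pos (hmuN a), hgb b,
        dif_pos (g b).isLt]
    have hIlvIff := ilv_iff lam hlam hlen (fun b => (g b : ℕ)) hgval
    have hν1 : ∀ i, nuOf rm (fun b => (g b : ℕ)) (i+1) ≤ nuOf rm (fun b => (g b : ℕ)) i :=
      fun i => nuOf_step hgval i
    by_cases hIlv : Ilv (fun a : Fin rm => ((g a : ℕ))) (fun b => maya lam rm b)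
    · obtain ⟨hsub2, hstrip⟩ := hIlvIff.mp hIlv
      by_cases hμν : ∀ i, mu i ≤ nuOf rm (fun b => (g b : ℕ)) i
      · rw [if_pos hIlv, if_pos ⟨hμν, hsub2, hstrip⟩, hAd,
          ih (nuOf rm (fun b => (g b : ℕ))) mu hν1 hmu hμν
            (fun i hi => nuOf_zero_of_ge _ hi) (nuOf_wid (fun b => (g b).isLt) hrmN)]
        congr 1
        calc ∏ b : Fin rm, ∏ t ∈ Finset.Ico ((g b : ℕ)) (maya lam rm b), ck t
            = ∏ b : Fin rm, ∏ t ∈ Finset.Ico (maya (nuOf rm (fun b => (g b : ℕ))) rm b)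
                (maya lam rm b), ck t := by
              refine Finset.prod_congr rfl fun b _ => ?_
              rw [hgb b]
          _ = ∏ i ∈ Finset.range rm, ∏ j ∈ Finset.Ico (nuOf rm (fun b => (g b : ℕ)) i)
                (lam i), ck (j + (rm-1-i)) := weight_trans ck _ lam rm
          _ = ∏ i ∈ Finset.range rm, ∏ j ∈ Finset.Ico (nuOf rm (fun b => (g b : ℕ)) i)
                (lam i), w (M+1) (m + (j:ℤ) - (i:ℤ)) := by
              refine Finset.prod_congr rfl fun i hi => Finset.prod_congr rfl fun j _ => ?_
              rw [Finset.mem_range] at hi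
              have harg : ((j + (rm-1-i) : ℕ) : ℤ) + 1 - r = m + (j:ℤ) - (i:ℤ) := by omega
              show w (M+1) (((j + (rm-1-i) : ℕ) : ℤ) + 1 - r) = w (M+1) (m + (j:ℤ) - (i:ℤ))
              rw [harg]
          _ = ∏ i ∈ Finset.range rm, ∏ j ∈ Finset.Ico (nuOf rm (fun b => (g b : ℕ)) i)
                (lam i), (fun k (c : ℕ × ℕ) => w k (m + (c.2 : ℤ) - (c.1 : ℤ))) (M+1) (i, j) :=
              rfl
      · push_neg at hμν
        obtain ⟨i₀, hi₀⟩ := hμν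
        have hi₀lt : i₀ < rm := by
          by_contra hc
          push_neg at hc
          have h1 : nuOf rm (fun b => (g b : ℕ)) i₀ = 0 := nuOf_zero_of_ge _ hc
          have h2 : mu i₀ ≤ lam i₀ := hsub i₀
          have h3 : lam i₀ = 0 := hlen i₀ hc
          omega
        rw [if_pos hIlv, hAd,
          schurV_eq_zero (UmatW N M r w) (utp_UmatW M r w) _ mu hν1 hmu hνN hmuN i₀ hi₀lt
            (by omega), zero_mul, if_neg]
        rintro ⟨hc, -, -⟩
        exact absurd (hc i₀) (by omega)
    · rw [if_neg hIlv, mul_zero, if_neg]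
      rintro ⟨-, h2, h3⟩
      exact hIlv (hIlvIff.mpr ⟨h2, h3⟩)

end TSaux

/-- Tableau specialization: `S^{(r+m)}_{λ/μ}(U_1 ⋯ U_M)` is the generating sum over
semistandard tableaux. -/
theorem tableau_specialization_ninth_variation {R : Type*} [CommRing R]
    (M N : ℕ) (hM : 0 < M) (hN : 0 < N)
    (r m : ℤ) (w : ℕ → ℤ → R)
    (rm : ℕ) (hrm : (rm : ℤ) = r + m) (hrmN : rm ≤ N)
    (lam mu : ℕ → ℕ)
    (hlam : ∀ i, lam (i + 1) ≤ lam i) (hmu : ∀ i, mu (i + 1) ≤ mu i)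
    (hsub : ∀ i, mu i ≤ lam i)
    (hlen : ∀ i, rm ≤ i → lam i = 0) (hwid : lam 0 ≤ N - rm) :
    SchurV (UmatW N M r w) rm lam mu =
      tabSum M rm lam mu (fun k c => w k (m + (c.2 : ℤ) - (c.1 : ℤ))) := by
  exact TSaux.main_aux hN r m w rm hrm hrmN M lam mu hlam hmu hsub hlen hwid
end

section
/- Desnanot–Jacobi quadratic relation, h-version (Theorem 3.2(1)): Let R be a commutative ring, N a positive integer, U an N×N upper unitriangular matrix over R, and k ≥ 1, r integers with k+1 ≤ r−1. Let λ = (λ_1 ≥ ⋯ ≥ λ_{k+1} ≥ 0) and μ = (μ_1 ≥ ⋯ ≥ μ_{k+1} ≥ 0) be partitions with μ_i ≤ λ_i for all i and λ_1 + 1 ≤ N − r. Then S^{(r)}_{(λ_1,…,λ_{k+1})/(μ_1,…,μ_{k+1})}(U) · S^{(r−1)}_{(λ_2,…,λ_k)/(μ_2,…,μ_k)}(U) = S^{(r)}_{(λ_1,…,λ_k)/(μ_1,…,μ_k)}(U) · S^{(r−1)}_{(λ_2,…,λ_{k+1})/(μ_2,…,μ_{k+1})}(U) − S^{(r)}_{(λ_2−1,…,λ_{k+1}−1)/(μ_1,…,μ_k)}(U)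 · S^{(r−1)}_{(λ_1+1,…,λ_k+1)/(μ_2,…,μ_{k+1})}(U), with the convention that S^{(r')}_{ν/κ}(U) := 0 whenever ν/κ is not a skew partition (in particular when some entry of ν is negative). -/
open Matrix BigOperators Finset Filter

section DJaux
variable {S : Type*} [CommRing S]

/-- identity matrix with column 0 replaced by `u` and last column by `v`. -/
def Mcols (n : ℕ) (u v : Fin (n + 2) → S) : Matrix (Fin (n + 2)) (Fin (n + 2)) S :=
  Matrix.of fun i j => if (j : ℕ) = 0 then u i else if (j : ℕ) = n + 1 then v i
    else if (i : ℕ) = (j : ℕ) then 1 else 0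

lemma Mcols_minor_zero (n : ℕ) (u v : Fin (n + 2) → S) :
    ((Mcols n u v).submatrix (Fin.succAbove 0) Fin.succ).det = v (Fin.last (n + 1)) := by
  have ht : BlockTriangular ((Mcols n u v).submatrix (Fin.succAbove 0) Fin.succ) id := by
    intro x j h
    have h' : (j : ℕ) < (x : ℕ) := h
    have hx : (x : ℕ) ≤ n := Nat.lt_succ_iff.mp x.isLt
    simp only [submatrix_apply, Fin.succAbove_zero, Mcols, of_apply, Fin.val_succ]
    rw [if_neg (by omega), if_neg (by omega), if_neg (by omega)]
  rw [det_of_upperTriangular ht]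
  have : ∀ x : Fin (n+1), ((Mcols n u v).submatrix (Fin.succAbove 0) Fin.succ) x x
      = if (x : ℕ) = n then v x.succ else 1 := by
    intro x
    simp only [submatrix_apply, Fin.succAbove_zero, Mcols, of_apply, Fin.val_succ]
    rw [if_neg (by omega)]
    by_cases hx : (x : ℕ) = n
    · rw [if_pos (by omega), if_pos hx]
    · rw [if_neg (by omega)]; simp [hx]
  rw [Finset.prod_congr rfl (fun x _ => this x)]
  rw [Finset.prod_eq_single (Fin.last n)]
  · rw [if_pos (by simp), Fin.succ_last]
  · intro x _ hx
    rw [if_neg (fun h => hx (Fin.ext (by simpa using h)))]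
  · simp

lemma Mcols_minor_last (n : ℕ) (u v : Fin (n + 2) → S) :
    ((Mcols n u v).submatrix (Fin.succAbove (Fin.last (n+1))) Fin.succ).det = (-1)^n * v 0 := by
  rw [Fin.succAbove_last, det_succ_row_zero]
  rw [Finset.sum_eq_single (Fin.last n)]
  · have h1 : ((Mcols n u v).submatrix Fin.castSucc Fin.succ) 0 (Fin.last n) = v 0 := by
      simp only [submatrix_apply, Mcols, of_apply, Fin.val_succ, Fin.val_last]
      rw [if_neg (by omega)]; simp
    have h2 : (((Mcols n u v).submatrix Fin.castSucc Fin.succ).submatrix Fin.succ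
        (Fin.last n).succAbove) = 1 := by
      ext x j
      rw [Fin.succAbove_last]
      simp only [submatrix_apply, Mcols, of_apply, Fin.val_succ, Fin.coe_castSucc]
      have hj : (j : ℕ) < n := j.isLt
      rw [if_neg (by omega), if_neg (by omega)]
      by_cases hxj : x = j
      · subst hxj; rw [if_pos rfl, one_apply_eq]
      · rw [if_neg (fun h => hxj (Fin.ext (by simpa using h))), one_apply_ne hxj]
    rw [h1, h2, det_one, Fin.val_last]; ring
  · intro j _ hj
    have h0 : ((Mcols n u v).submatrix Fin.castSucc Fin.succ) 0 j = 0 := by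
      simp only [submatrix_apply, Mcols, of_apply, Fin.val_succ]
      have hj' : (j : ℕ) < n := by
        have := j.isLt
        rcases Nat.lt_succ_iff_lt_or_eq.mp this with h | h
        · exact h
        · exact absurd (Fin.ext h : j = Fin.last n) hj
      rw [if_neg (by omega), if_neg (by omega), if_neg (by simp)]
    rw [h0, mul_zero, zero_mul]
  · simp

lemma Mcols_minor_mid (n : ℕ) (u v : Fin (n + 2) → S) (i : Fin (n+2)) (h0 : i ≠ 0)
    (hl : i ≠ Fin.last (n+1)) :
    ((Mcols n u v).submatrix i.succAbove Fin.succ).det = 0 := by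
  have hi0 : (i : ℕ) ≠ 0 := fun h => h0 (Fin.ext h)
  have hil : (i : ℕ) ≠ n + 1 := fun h => hl (Fin.ext (by simpa using h))
  obtain ⟨c, hc⟩ : ∃ c : Fin (n+1), c.succ = i := ⟨i.pred h0, Fin.succ_pred i h0⟩
  apply det_eq_zero_of_column_eq_zero c
  intro x
  simp only [submatrix_apply, Mcols, of_apply, hc]
  rw [if_neg hi0, if_neg hil, if_neg]
  exact fun h => (Fin.succAbove_ne i x) (Fin.ext h)

lemma det_Mcols (n : ℕ) (u v : Fin (n + 2) → S) :
    (Mcols n u v).det = u 0 * v (Fin.last (n + 1)) - v 0 * u (Fin.last (n + 1)) := by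
  rw [det_succ_column_zero]
  have hM0 : ∀ i, (Mcols n u v) i 0 = u i := by
    intro i; simp [Mcols]
  rw [← Finset.sum_subset (Finset.subset_univ {0, Fin.last (n+1)})
    (fun i _ hi => ?_)]
  · have hne : (0 : Fin (n+2)) ≠ Fin.last (n+1) := by
      intro h; have := congrArg Fin.val h; simp at this
    rw [Finset.sum_pair hne, hM0, hM0, Mcols_minor_zero, Mcols_minor_last]
    simp only [Fin.val_zero, pow_zero, one_mul, Fin.val_last]
    have hpow : ((-1 : S)) ^ (n + 1) * ((-1 : S) ^ n) = -1 := by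
      rw [pow_succ, mul_comm ((-1:S)^n), mul_assoc, ← pow_add]
      have : ((-1:S))^(n+n) = 1 := by
        have : n + n = 2 * n := by ring
        rw [this, pow_mul]; simp
      rw [this]; ring
    ring_nf
    rw [mul_comm (n:ℕ) 2, pow_mul]
    simp
  · simp only [Finset.mem_insert, Finset.mem_singleton, not_or] at hi
    rw [Mcols_minor_mid n u v i hi.1 hi.2, mul_zero]
end DJaux
section DJ2
variable {S : Type*} [CommRing S]

def Bmat (n : ℕ) (d : S) (A : Matrix (Fin (n+2)) (Fin (n+2)) S) :
    Matrix (Fin (n+2)) (Fin (n+2)) S :=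
  Matrix.of fun i j => if (j : ℕ) = 0 then (if (i : ℕ) = 0 then d else 0)
    else if (j : ℕ) = n + 1 then (if (i : ℕ) = n + 1 then d else 0) else A i j

lemma det_Bmat (n : ℕ) (d : S) (A : Matrix (Fin (n+2)) (Fin (n+2)) S) :
    (Bmat n d A).det =
      d * (d * (A.submatrix (fun i : Fin n => i.succ.castSucc)
        (fun i : Fin n => i.succ.castSucc)).det) := by
  rw [det_succ_column_zero]
  rw [Finset.sum_eq_single 0]
  · have hB0 : (Bmat n d A) 0 0 = d := by simp [Bmat]
    rw [hB0, Fin.val_zero, pow_zero, one_mul]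
    congr 1
    -- det of submatrix succAbove 0 succ
    rw [Fin.succAbove_zero, det_succ_column _ (Fin.last n)]
    rw [Finset.sum_eq_single (Fin.last n)]
    · have h1 : ((Bmat n d A).submatrix Fin.succ Fin.succ) (Fin.last n) (Fin.last n) = d := by
        simp [Bmat]
      rw [h1, Fin.val_last, Fin.succAbove_last]
      have h2 : (((Bmat n d A).submatrix Fin.succ Fin.succ).submatrix Fin.castSucc Fin.castSucc)
          = A.submatrix (fun i : Fin n => i.succ.castSucc) (fun i : Fin n => i.succ.castSucc) := by
        ext x j
        simp only [submatrix_apply, Bmat, of_apply, Fin.val_succ, Fin.coe_castSucc]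
        have hj : (j : ℕ) < n := j.isLt
        rw [if_neg (by omega), if_neg (by omega)]
        rw [Fin.succ_castSucc, Fin.succ_castSucc]
      rw [h2]
      have : ((-1 : S)) ^ ((n : ℕ) + (n : ℕ)) = 1 := by
        have : (n : ℕ) + n = 2 * n := by ring
        rw [this, pow_mul]; simp
      rw [this, one_mul]
    · intro x _ hx
      have h0 : ((Bmat n d A).submatrix Fin.succ Fin.succ) x (Fin.last n) = 0 := by
        have hxn : (x : ℕ) ≠ n := fun h => hx (Fin.ext (by simpa using h))
        have hne : ¬ ((x:ℕ) + 1 = n + 1) := by omega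
        simp only [submatrix_apply, Bmat, of_apply, Fin.val_succ, Fin.val_last]
        simp [hne, hxn]
      rw [h0, mul_zero, zero_mul]
    · simp
  · intro i _ hi
    have h0 : (Bmat n d A) i 0 = 0 := by
      have hne : ¬ ((i:ℕ) = 0) := fun h => hi (Fin.ext h)
      simp only [Bmat, of_apply, Fin.val_zero]
      simp [hne]
    rw [h0, mul_zero, zero_mul]
  · simp

lemma mul_Mcols (n : ℕ) (A : Matrix (Fin (n+2)) (Fin (n+2)) S) :
    A * (Mcols n (fun i => adjugate A i 0) (fun i => adjugate A i (Fin.last (n+1)))) =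
      Bmat n A.det A := by
  have hadj := mul_adjugate A
  ext i j
  rw [mul_apply]
  simp only [Bmat, of_apply]
  by_cases h0 : (j : ℕ) = 0
  · have hj : j = 0 := Fin.ext h0
    subst hj
    have hs : ∑ x, A i x * Mcols n (fun i => adjugate A i 0)
        (fun i => adjugate A i (Fin.last (n+1))) x 0 = ∑ x, A i x * adjugate A x 0 :=
      Finset.sum_congr rfl fun x _ => by simp [Mcols]
    have hd := congrFun (congrFun hadj i) 0
    rw [mul_apply] at hd
    rw [hs, hd]
    by_cases hi : i = 0
    · subst hi; simp
    · have hi' : (i : ℕ) ≠ 0 := fun h => hi (Fin.ext h)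
      simp [hi, hi']
  · by_cases hl : (j : ℕ) = n + 1
    · have hj : j = Fin.last (n+1) := Fin.ext (by simpa using hl)
      subst hj
      have hs : ∑ x, A i x * Mcols n (fun i => adjugate A i 0)
          (fun i => adjugate A i (Fin.last (n+1))) x (Fin.last (n+1)) =
          ∑ x, A i x * adjugate A x (Fin.last (n+1)) :=
        Finset.sum_congr rfl fun x _ => by
          simp only [Mcols, of_apply, Fin.val_last]
          rw [if_neg (by omega)]
          simp
      have hd := congrFun (congrFun hadj i) (Fin.last (n+1))
      rw [mul_apply] at hd
      rw [hs, hd]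
      simp [Matrix.one_apply, Fin.ext_iff]
    · rw [if_neg h0, if_neg hl]
      have hs : ∑ x, A i x * Mcols n (fun i => adjugate A i 0)
          (fun i => adjugate A i (Fin.last (n+1))) x j =
          ∑ x, A i x * (if x = j then 1 else 0) :=
        Finset.sum_congr rfl fun x _ => by
          simp only [Mcols, of_apply]
          rw [if_neg h0, if_neg hl]
          congr 1
          simp [Fin.ext_iff]
      rw [hs]
      simp [mul_ite]

lemma dj_core (n : ℕ) (A : Matrix (Fin (n+2)) (Fin (n+2)) S) :
    A.det * (A.det * (A.submatrix (fun i : Fin n => i.succ.castSucc)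
        (fun i : Fin n => i.succ.castSucc)).det) =
    A.det * ((A.submatrix Fin.succ Fin.succ).det *
        (A.submatrix Fin.castSucc Fin.castSucc).det -
      (A.submatrix Fin.succ Fin.castSucc).det *
        (A.submatrix Fin.castSucc Fin.succ).det) := by
  have h1 := congrArg Matrix.det (mul_Mcols n A)
  rw [det_mul, det_Mcols, det_Bmat] at h1
  rw [← h1]
  congr 1
  have e00 : adjugate A 0 0 = (A.submatrix Fin.succ Fin.succ).det := by
    rw [adjugate_fin_succ_eq_det_submatrix]
    simp [Fin.succAbove_zero]
  have ell : adjugate A (Fin.last (n+1)) (Fin.last (n+1)) =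
      (A.submatrix Fin.castSucc Fin.castSucc).det := by
    rw [adjugate_fin_succ_eq_det_submatrix]
    rw [Fin.succAbove_last]
    have : ((-1 : S)) ^ ((Fin.last (n+1) : ℕ) + (Fin.last (n+1) : ℕ)) = 1 := by
      rw [Fin.val_last]
      have : (n + 1) + (n + 1) = 2 * (n+1) := by ring
      rw [this, pow_mul]; simp
    rw [this, one_mul]
  have e0l : adjugate A 0 (Fin.last (n+1)) =
      (-1 : S) ^ (n+1) * (A.submatrix Fin.castSucc Fin.succ).det := by
    rw [adjugate_fin_succ_eq_det_submatrix]
    rw [Fin.succAbove_last, Fin.succAbove_zero]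
    simp
  have el0 : adjugate A (Fin.last (n+1)) 0 =
      (-1 : S) ^ (n+1) * (A.submatrix Fin.succ Fin.castSucc).det := by
    rw [adjugate_fin_succ_eq_det_submatrix]
    rw [Fin.succAbove_last, Fin.succAbove_zero]
    simp
  have hpow : ((-1 : S)) ^ (n+1) * ((-1 : S)) ^ (n+1) = 1 := by
    rw [← pow_add]
    have : (n + 1) + (n + 1) = 2 * (n+1) := by ring
    rw [this, pow_mul]; simp
  rw [e00, ell, e0l, el0, mul_mul_mul_comm, hpow, one_mul]
  ring
end DJ2
section DJ3

lemma dj_identity {S : Type*} [CommRing S] (n : ℕ) (A : Matrix (Fin (n+2)) (Fin (n+2)) S) :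
    A.det * (A.submatrix (fun i : Fin n => i.succ.castSucc)
        (fun i : Fin n => i.succ.castSucc)).det =
    (A.submatrix Fin.succ Fin.succ).det * (A.submatrix Fin.castSucc Fin.castSucc).det -
      (A.submatrix Fin.succ Fin.castSucc).det * (A.submatrix Fin.castSucc Fin.succ).det := by
  let G : Matrix (Fin (n+2)) (Fin (n+2)) (MvPolynomial (Fin (n+2) × Fin (n+2)) ℤ) :=
    Matrix.of fun i j => MvPolynomial.X (i, j)
  have hGdet : G.det ≠ 0 := by
    intro h
    have h2 := congrArg (MvPolynomial.aeval (R := ℤ) (fun p : Fin (n+2) × Fin (n+2) =>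
      if p.1 = p.2 then (1:ℤ) else 0)) h
    rw [map_zero] at h2
    rw [show ((MvPolynomial.aeval (R := ℤ) (fun p : Fin (n+2) × Fin (n+2) =>
      if p.1 = p.2 then (1:ℤ) else 0)) G.det) = ((G.map (MvPolynomial.aeval (R := ℤ)
        (fun p : Fin (n+2) × Fin (n+2) => if p.1 = p.2 then (1:ℤ) else 0))).det)
      from RingHom.map_det _ G] at h2
    have hid : (G.map (MvPolynomial.aeval (R := ℤ) (fun p : Fin (n+2) × Fin (n+2) =>
        if p.1 = p.2 then (1:ℤ) else 0))) = (1 : Matrix (Fin (n+2)) (Fin (n+2)) ℤ) := by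
      ext i j
      simp [G, Matrix.map_apply, Matrix.one_apply]
    rw [hid, det_one] at h2
    exact one_ne_zero h2
  have hG2 : G.det * ((G.submatrix (fun i : Fin n => i.succ.castSucc)
      (fun i : Fin n => i.succ.castSucc)).det) =
      (G.submatrix Fin.succ Fin.succ).det * (G.submatrix Fin.castSucc Fin.castSucc).det -
      (G.submatrix Fin.succ Fin.castSucc).det * (G.submatrix Fin.castSucc Fin.succ).det :=
    mul_left_cancel₀ hGdet (dj_core n G)
  let φ := (MvPolynomial.aeval (R := ℤ) (fun p : Fin (n+2) × Fin (n+2) => A p.1 p.2) :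
    MvPolynomial (Fin (n+2) × Fin (n+2)) ℤ →ₐ[ℤ] S)
  have hmap : G.map ⇑φ = A := by
    ext i j
    simp [G, φ, Matrix.map_apply]
  have key : ∀ {m : ℕ} (e₁ e₂ : Fin m → Fin (n+2)),
      φ ((G.submatrix e₁ e₂).det) = (A.submatrix e₁ e₂).det := by
    intro m e₁ e₂
    rw [show φ ((G.submatrix e₁ e₂).det) = ((G.submatrix e₁ e₂).map ⇑φ).det
      from RingHom.map_det φ.toRingHom _]
    rw [← Matrix.submatrix_map ⇑φ e₁ e₂ G, hmap]
  have hdetG : φ G.det = A.det := by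
    rw [show φ G.det = (G.map ⇑φ).det from RingHom.map_det φ.toRingHom _, hmap]
  have h3 := congrArg φ hG2
  rw [_root_.map_mul, _root_.map_sub, _root_.map_mul, _root_.map_mul, hdetG,
    key, key, key, key, key] at h3
  exact h3

end DJ3


-- ### auxiliary lemmas

lemma matExt_lower {R : Type*} [CommRing R] {N : ℕ} {U : Matrix (Fin N) (Fin N) R}
    (hU : UpperUni U) {a b : ℕ} (h : b < a) : matExt U a b = 0 := by
  unfold matExt
  split_ifs with h1 h2
  · exact hU.2 _ _ h
  · rfl
  · rfl

lemma matExt_diag {R : Type*} [CommRing R] {N : ℕ} {U : Matrix (Fin N) (Fin N) R}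
    (hU : UpperUni U) {a : ℕ} (h : a < N) : matExt U a a = 1 := by
  unfold matExt
  rw [dif_pos h, dif_pos h, hU.1]

lemma matExt_congr {R : Type*} [CommRing R] {N : ℕ} (U : Matrix (Fin N) (Fin N) R)
    {a b a' b' : ℕ} (ha : a = a') (hb : b = b') : matExt U a b = matExt U a' b' := by
  rw [ha, hb]

/-- determinant vanishes if there is a large zero lower-left block -/
lemma det_zero_of_block {S : Type*} [CommRing S] {m : ℕ} (V : Matrix (Fin m) (Fin m) S)
    (t : Fin m) (h : ∀ i j : Fin m, t ≤ i → j ≤ t → V i j = 0) : V.det = 0 := by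
  rw [Matrix.det_apply]
  apply Finset.sum_eq_zero
  intro σ _
  have hex : ∃ j : Fin m, j ≤ t ∧ t ≤ σ j := by
    by_contra hc
    push_neg at hc
    have hmaps : ∀ j ∈ Finset.Iic t, σ j ∈ Finset.Iio t := fun j hj =>
      Finset.mem_Iio.mpr (hc j (Finset.mem_Iic.mp hj))
    have hcard := Finset.card_le_card_of_injOn σ hmaps (σ.injective.injOn)
    rw [Fin.card_Iic, Fin.card_Iio] at hcard
    omega
  obtain ⟨j, hj1, hj2⟩ := hex
  have : V (σ j) j = 0 := h (σ j) j hj2 hj1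
  have hz : ∏ i : Fin m, V (σ i) i = 0 := Finset.prod_eq_zero (Finset.mem_univ j) this
  rw [hz, smul_zero]

/-- the compressed `m × m` matrix underlying `S^{(r)}_{λ/μ}` -/
def Wmat {R : Type*} [CommRing R] {N : ℕ} (U : Matrix (Fin N) (Fin N) R) (m r : ℕ)
    (lam mu : ℕ → ℕ) : Matrix (Fin m) (Fin m) R :=
  Matrix.of fun i j => matExt U (mu (m - 1 - (i : ℕ)) + (r - m) + (i : ℕ))
    (lam (m - 1 - (j : ℕ)) + (r - m) + (j : ℕ))

lemma Wmat_congr {R : Type*} [CommRing R] {N : ℕ} (U : Matrix (Fin N) (Fin N) R) (m r : ℕ)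
    {lam mu lam' mu' : ℕ → ℕ} (hl : ∀ i, i < m → lam i = lam' i)
    (hm : ∀ i, i < m → mu i = mu' i) : Wmat U m r lam mu = Wmat U m r lam' mu' := by
  ext i j
  simp only [Wmat, of_apply]
  exact matExt_congr U (by rw [hm _ (by omega)]) (by rw [hl _ (by omega)])

lemma schurV_eq_Wmat {R : Type*} [CommRing R] {N : ℕ} (U : Matrix (Fin N) (Fin N) R)
    (hU : UpperUni U) (m r : ℕ) (hm : m ≤ r) (hrN : r ≤ N) (lam mu : ℕ → ℕ)
    (hl0 : ∀ i, m ≤ i → lam i = 0) (hm0 : ∀ i, m ≤ i → mu i = 0) :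
    SchurV U r lam mu = (Wmat U m r lam mu).det := by
  have hrm : r - m + m = r := by omega
  let e : Fin (r - m) ⊕ Fin m ≃ Fin r := finSumFinEquiv.trans (finCongr hrm)
  have hvl : ∀ a : Fin (r - m), ((e (Sum.inl a)) : ℕ) = (a : ℕ) := by
    intro a; simp [e, finSumFinEquiv]
  have hvr : ∀ b : Fin m, ((e (Sum.inr b)) : ℕ) = (r - m) + (b : ℕ) := by
    intro b; simp [e, finSumFinEquiv]
  let T : Matrix (Fin (r - m)) (Fin (r - m)) R := Matrix.of fun a b => matExt U (a : ℕ) (b : ℕ)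
  let Bm : Matrix (Fin (r - m)) (Fin m) R :=
    Matrix.of fun a j => matExt U (a : ℕ) (lam (m - 1 - (j : ℕ)) + (r - m) + (j : ℕ))
  rw [SchurV, ← Matrix.det_submatrix_equiv_self e]
  have hmayal : ∀ (f : ℕ → ℕ), (∀ i, m ≤ i → f i = 0) → ∀ a : Fin (r - m),
      maya f r (e (Sum.inl a)) = (a : ℕ) := by
    intro f hf a
    unfold maya
    rw [hvl, hf _ (by have := a.isLt; omega), zero_add]
  have hmayar : ∀ (f : ℕ → ℕ) (b : Fin m),
      maya f r (e (Sum.inr b)) = f (m - 1 - (b : ℕ)) + (r - m) + (b : ℕ) := by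
    intro f b
    unfold maya
    rw [hvr]
    have hb := b.isLt
    have : r - 1 - (r - m + (b : ℕ)) = m - 1 - (b : ℕ) := by omega
    rw [this]
    omega
  have hsub : ((Matrix.of fun i j : Fin r => matExt U (maya mu r i) (maya lam r j)).submatrix
      ⇑e ⇑e) = Matrix.fromBlocks T Bm 0 (Wmat U m r lam mu) := by
    ext i j
    cases i with
    | inl a =>
      cases j with
      | inl b =>
        show matExt U (maya mu r (e (Sum.inl a))) (maya lam r (e (Sum.inl b))) = T a b
        rw [hmayal mu hm0, hmayal lam hl0]; rfl
      | inr b =>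
        show matExt U (maya mu r (e (Sum.inl a))) (maya lam r (e (Sum.inr b))) = Bm a b
        rw [hmayal mu hm0, hmayar lam]; rfl
    | inr a =>
      cases j with
      | inl b =>
        show matExt U (maya mu r (e (Sum.inr a))) (maya lam r (e (Sum.inl b))) = 0
        rw [hmayal lam hl0, hmayar mu]
        exact matExt_lower hU (by have := b.isLt; omega)
      | inr b =>
        show matExt U (maya mu r (e (Sum.inr a))) (maya lam r (e (Sum.inr b))) =
          Wmat U m r lam mu a b
        rw [hmayar mu, hmayar lam]; rfl
  rw [hsub, Matrix.det_fromBlocks_zero₂₁]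
  have hT : T.det = 1 := by
    have ht : BlockTriangular T id := by
      intro x y hxy
      exact matExt_lower hU hxy
    rw [det_of_upperTriangular ht]
    apply Finset.prod_eq_one
    intro x _
    exact matExt_diag hU (by have := x.isLt; omega)
  rw [hT, one_mul]

lemma SchurVz_eq_of_skew {R : Type*} [CommRing R] {N : ℕ} (U : Matrix (Fin N) (Fin N) R)
    (r B : ℕ) (lamZ muZ : ℕ → ℤ) (lamN muN : ℕ → ℕ) (hskew : IsSkewZ B lamZ muZ)
    (hl : ∀ i, (lamZ i).toNat = lamN i) (hm : ∀ i, (muZ i).toNat = muN i) :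
    SchurVz U r B lamZ muZ = SchurV U r lamN muN := by
  rw [SchurVz, if_pos hskew, funext hl, funext hm]


/-- Desnanot–Jacobi quadratic relation for the ninth variation, `h`-version. -/
theorem desnanot_jacobi_h {R : Type*} [CommRing R] {N : ℕ} (hN : 0 < N)
    (U : Matrix (Fin N) (Fin N) R) (hU : UpperUni U)
    (k r : ℕ) (hk : 1 ≤ k) (hr : k + 1 ≤ r - 1) (hrN : r ≤ N)
    (lam mu : ℕ → ℕ)
    (hlam : ∀ i, lam (i + 1) ≤ lam i) (hmu : ∀ i, mu (i + 1) ≤ mu i)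
    (hsub : ∀ i, mu i ≤ lam i)
    (hlen : ∀ i, k + 1 ≤ i → lam i = 0)
    (hwid : lam 0 + 1 ≤ N - r) :
    SchurVz U r (k + 1) (fun i => if i < k + 1 then (lam i : ℤ) else 0)
        (fun i => if i < k + 1 then (mu i : ℤ) else 0) *
      SchurVz U (r - 1) (k + 1) (fun i => if i < k - 1 then (lam (i + 1) : ℤ) else 0)
        (fun i => if i < k - 1 then (mu (i + 1) : ℤ) else 0) =
    SchurVz U r (k + 1) (fun i => if i < k then (lam i : ℤ) else 0)
        (fun i => if i < k then (mu i : ℤ) else 0) *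
      SchurVz U (r - 1) (k + 1) (fun i => if i < k then (lam (i + 1) : ℤ) else 0)
        (fun i => if i < k then (mu (i + 1) : ℤ) else 0) -
    SchurVz U r (k + 1) (fun i => if i < k then (lam (i + 1) : ℤ) - 1 else 0)
        (fun i => if i < k then (mu i : ℤ) else 0) *
      SchurVz U (r - 1) (k + 1) (fun i => if i < k then (lam i : ℤ) + 1 else 0)
        (fun i => if i < k then (mu (i + 1) : ℤ) else 0) := by
  obtain ⟨n, rfl⟩ : ∃ n, k = n + 1 := ⟨k - 1, by omega⟩
  have hr3 : n + 3 ≤ r := by omega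
  have hAl : Antitone lam := antitone_nat_of_succ_le hlam
  have hAm : Antitone mu := antitone_nat_of_succ_le hmu
  -- Term A
  have hA : SchurVz U r (n + 1 + 1) (fun i => if i < n + 1 + 1 then (lam i : ℤ) else 0)
      (fun i => if i < n + 1 + 1 then (mu i : ℤ) else 0) = (Wmat U (n + 2) r lam mu).det := by
    have hsk : IsSkewZ (n + 1 + 1) (fun i => if i < n + 1 + 1 then (lam i : ℤ) else 0)
        (fun i => if i < n + 1 + 1 then (mu i : ℤ) else 0) := by
      refine ⟨⟨fun i => ?_, fun i => ?_, fun i hi => ?_⟩,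
        ⟨fun i => ?_, fun i => ?_, fun i hi => ?_⟩, fun i => ?_⟩ <;>
        (have e1 := hlam i; have e3 := hmu i; have e5 := hsub i; dsimp only; split_ifs <;> omega)
    rw [SchurVz_eq_of_skew U r (n + 1 + 1) _ _ (fun i => if i < n + 2 then lam i else 0)
        (fun i => if i < n + 2 then mu i else 0) hsk (fun i => by split_ifs <;> omega)
        (fun i => by split_ifs <;> omega)]
    rw [schurV_eq_Wmat U hU (n + 2) r (by omega) hrN _ _ (fun i hi => if_neg (by omega))
        (fun i hi => if_neg (by omega))]
    exact congrArg Matrix.det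
      (Wmat_congr U (n + 2) r (fun i hi => if_pos hi) (fun i hi => if_pos hi))
  -- Term B
  have hB : SchurVz U (r - 1) (n + 1 + 1) (fun i => if i < n + 1 - 1 then (lam (i + 1) : ℤ) else 0)
      (fun i => if i < n + 1 - 1 then (mu (i + 1) : ℤ) else 0) =
      ((Wmat U (n + 2) r lam mu).submatrix (fun i : Fin n => i.succ.castSucc)
        (fun i : Fin n => i.succ.castSucc)).det := by
    have hsk : IsSkewZ (n + 1 + 1) (fun i => if i < n + 1 - 1 then (lam (i + 1) : ℤ) else 0)
        (fun i => if i < n + 1 - 1 then (mu (i + 1) : ℤ) else 0) := by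
      refine ⟨⟨fun i => ?_, fun i => ?_, fun i hi => ?_⟩,
        ⟨fun i => ?_, fun i => ?_, fun i hi => ?_⟩, fun i => ?_⟩ <;>
        (have e2 := hlam (i + 1); have e4 := hmu (i + 1); have e6 := hsub (i + 1);
         dsimp only; split_ifs <;> omega)
    rw [SchurVz_eq_of_skew U (r - 1) (n + 1 + 1) _ _ (fun i => if i < n then lam (i + 1) else 0)
        (fun i => if i < n then mu (i + 1) else 0) hsk (fun i => by split_ifs <;> omega)
        (fun i => by split_ifs <;> omega)]
    rw [schurV_eq_Wmat U hU n (r - 1) (by omega) (by omega) _ _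
        (fun i hi => if_neg (by omega)) (fun i hi => if_neg (by omega))]
    congr 1
    ext i j
    have hi := i.isLt
    have hj := j.isLt
    simp only [Wmat, of_apply, submatrix_apply, Fin.coe_castSucc, Fin.val_succ]
    refine matExt_congr U ?_ ?_
    · rw [if_pos (show n - 1 - (i : ℕ) < n by omega)]
      rw [show n - 1 - (i : ℕ) + 1 = n - (i : ℕ) from by omega,
          show n + 2 - 1 - ((i : ℕ) + 1) = n - (i : ℕ) from by omega]
      omega
    · rw [if_pos (show n - 1 - (j : ℕ) < n by omega)]
      rw [show n - 1 - (j : ℕ) + 1 = n - (j : ℕ) from by omega,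
          show n + 2 - 1 - ((j : ℕ) + 1) = n - (j : ℕ) from by omega]
      omega
  -- Term C
  have hC : SchurVz U r (n + 1 + 1) (fun i => if i < n + 1 then (lam i : ℤ) else 0)
      (fun i => if i < n + 1 then (mu i : ℤ) else 0) =
      ((Wmat U (n + 2) r lam mu).submatrix Fin.succ Fin.succ).det := by
    have hsk : IsSkewZ (n + 1 + 1) (fun i => if i < n + 1 then (lam i : ℤ) else 0)
        (fun i => if i < n + 1 then (mu i : ℤ) else 0) := by
      refine ⟨⟨fun i => ?_, fun i => ?_, fun i hi => ?_⟩,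
        ⟨fun i => ?_, fun i => ?_, fun i hi => ?_⟩, fun i => ?_⟩ <;>
        (have e1 := hlam i; have e3 := hmu i; have e5 := hsub i; dsimp only; split_ifs <;> omega)
    rw [SchurVz_eq_of_skew U r (n + 1 + 1) _ _ (fun i => if i < n + 1 then lam i else 0)
        (fun i => if i < n + 1 then mu i else 0) hsk (fun i => by split_ifs <;> omega)
        (fun i => by split_ifs <;> omega)]
    rw [schurV_eq_Wmat U hU (n + 1) r (by omega) hrN _ _ (fun i hi => if_neg (by omega))
        (fun i hi => if_neg (by omega))]
    congr 1
    ext i j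
    have hi := i.isLt
    have hj := j.isLt
    simp only [Wmat, of_apply, submatrix_apply, Fin.val_succ]
    refine matExt_congr U ?_ ?_
    · rw [if_pos (show n + 1 - 1 - (i : ℕ) < n + 1 by omega)]
      rw [show n + 1 - 1 - (i : ℕ) = n - (i : ℕ) from by omega,
          show n + 2 - 1 - ((i : ℕ) + 1) = n - (i : ℕ) from by omega]
      omega
    · rw [if_pos (show n + 1 - 1 - (j : ℕ) < n + 1 by omega)]
      rw [show n + 1 - 1 - (j : ℕ) = n - (j : ℕ) from by omega,
          show n + 2 - 1 - ((j : ℕ) + 1) = n - (j : ℕ) from by omega]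
      omega
  -- Term D
  have hD : SchurVz U (r - 1) (n + 1 + 1) (fun i => if i < n + 1 then (lam (i + 1) : ℤ) else 0)
      (fun i => if i < n + 1 then (mu (i + 1) : ℤ) else 0) =
      ((Wmat U (n + 2) r lam mu).submatrix Fin.castSucc Fin.castSucc).det := by
    have hsk : IsSkewZ (n + 1 + 1) (fun i => if i < n + 1 then (lam (i + 1) : ℤ) else 0)
        (fun i => if i < n + 1 then (mu (i + 1) : ℤ) else 0) := by
      refine ⟨⟨fun i => ?_, fun i => ?_, fun i hi => ?_⟩,
        ⟨fun i => ?_, fun i => ?_, fun i hi => ?_⟩, fun i => ?_⟩ <;>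
        (have e2 := hlam (i + 1); have e4 := hmu (i + 1); have e6 := hsub (i + 1);
         dsimp only; split_ifs <;> omega)
    rw [SchurVz_eq_of_skew U (r - 1) (n + 1 + 1) _ _
        (fun i => if i < n + 1 then lam (i + 1) else 0)
        (fun i => if i < n + 1 then mu (i + 1) else 0) hsk (fun i => by split_ifs <;> omega)
        (fun i => by split_ifs <;> omega)]
    rw [schurV_eq_Wmat U hU (n + 1) (r - 1) (by omega) (by omega) _ _
        (fun i hi => if_neg (by omega)) (fun i hi => if_neg (by omega))]
    congr 1
    ext i j
    have hi := i.isLt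
    have hj := j.isLt
    simp only [Wmat, of_apply, submatrix_apply, Fin.coe_castSucc]
    refine matExt_congr U ?_ ?_
    · rw [if_pos (show n + 1 - 1 - (i : ℕ) < n + 1 by omega)]
      rw [show n + 1 - 1 - (i : ℕ) + 1 = n + 1 - (i : ℕ) from by omega,
          show n + 2 - 1 - (i : ℕ) = n + 1 - (i : ℕ) from by omega]
      omega
    · rw [if_pos (show n + 1 - 1 - (j : ℕ) < n + 1 by omega)]
      rw [show n + 1 - 1 - (j : ℕ) + 1 = n + 1 - (j : ℕ) from by omega,
          show n + 2 - 1 - (j : ℕ) = n + 1 - (j : ℕ) from by omega]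
      omega
  -- Term F
  have hF : SchurVz U (r - 1) (n + 1 + 1) (fun i => if i < n + 1 then (lam i : ℤ) + 1 else 0)
      (fun i => if i < n + 1 then (mu (i + 1) : ℤ) else 0) =
      ((Wmat U (n + 2) r lam mu).submatrix Fin.castSucc Fin.succ).det := by
    have hsk : IsSkewZ (n + 1 + 1) (fun i => if i < n + 1 then (lam i : ℤ) + 1 else 0)
        (fun i => if i < n + 1 then (mu (i + 1) : ℤ) else 0) := by
      refine ⟨⟨fun i => ?_, fun i => ?_, fun i hi => ?_⟩,
        ⟨fun i => ?_, fun i => ?_, fun i hi => ?_⟩, fun i => ?_⟩ <;>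
        (have e1 := hlam i; have e4 := hmu (i + 1); have e6 := hsub (i + 1);
         dsimp only; split_ifs <;> omega)
    rw [SchurVz_eq_of_skew U (r - 1) (n + 1 + 1) _ _
        (fun i => if i < n + 1 then lam i + 1 else 0)
        (fun i => if i < n + 1 then mu (i + 1) else 0) hsk (fun i => by split_ifs <;> omega)
        (fun i => by split_ifs <;> omega)]
    rw [schurV_eq_Wmat U hU (n + 1) (r - 1) (by omega) (by omega) _ _
        (fun i hi => if_neg (by omega)) (fun i hi => if_neg (by omega))]
    congr 1
    ext i j
    have hi := i.isLt
    have hj := j.isLt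
    simp only [Wmat, of_apply, submatrix_apply, Fin.coe_castSucc, Fin.val_succ]
    refine matExt_congr U ?_ ?_
    · rw [if_pos (show n + 1 - 1 - (i : ℕ) < n + 1 by omega)]
      rw [show n + 1 - 1 - (i : ℕ) + 1 = n + 2 - 1 - (i : ℕ) from by omega]
      omega
    · rw [if_pos (show n + 1 - 1 - (j : ℕ) < n + 1 by omega)]
      rw [show n + 1 - 1 - (j : ℕ) = n - (j : ℕ) from by omega,
          show n + 2 - 1 - ((j : ℕ) + 1) = n - (j : ℕ) from by omega]
      omega
  rw [hA, hB, hC, hD, hF]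
  by_cases hEs : IsSkewZ (n + 1 + 1) (fun i => if i < n + 1 then (lam (i + 1) : ℤ) - 1 else 0)
      (fun i => if i < n + 1 then (mu i : ℤ) else 0)
  · -- skew case for term E
    have hpos : ∀ i, i < n + 1 → 1 ≤ lam (i + 1) := by
      intro i hi
      have h9 := hEs.1.2.1 i
      dsimp only at h9
      rw [if_pos hi] at h9
      omega
    have hE : SchurVz U r (n + 1 + 1) (fun i => if i < n + 1 then (lam (i + 1) : ℤ) - 1 else 0)
        (fun i => if i < n + 1 then (mu i : ℤ) else 0) =
        ((Wmat U (n + 2) r lam mu).submatrix Fin.succ Fin.castSucc).det := by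
      rw [SchurVz_eq_of_skew U r (n + 1 + 1) _ _
          (fun i => if i < n + 1 then lam (i + 1) - 1 else 0)
          (fun i => if i < n + 1 then mu i else 0) hEs (fun i => by split_ifs <;> omega)
          (fun i => by split_ifs <;> omega)]
      rw [schurV_eq_Wmat U hU (n + 1) r (by omega) hrN _ _
          (fun i hi => if_neg (by omega)) (fun i hi => if_neg (by omega))]
      congr 1
      ext i j
      have hi := i.isLt
      have hj := j.isLt
      simp only [Wmat, of_apply, submatrix_apply, Fin.coe_castSucc, Fin.val_succ]
      refine matExt_congr U ?_ ?_
      · rw [if_pos (show n + 1 - 1 - (i : ℕ) < n + 1 by omega)]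
        rw [show n + 1 - 1 - (i : ℕ) = n - (i : ℕ) from by omega,
            show n + 2 - 1 - ((i : ℕ) + 1) = n - (i : ℕ) from by omega]
        omega
      · rw [if_pos (show n + 1 - 1 - (j : ℕ) < n + 1 by omega)]
        rw [show n + 1 - 1 - (j : ℕ) + 1 = n + 1 - (j : ℕ) from by omega,
            show n + 2 - 1 - (j : ℕ) = n + 1 - (j : ℕ) from by omega]
        have h9 := hpos (n - (j : ℕ)) (by omega)
        rw [show n - (j : ℕ) + 1 = n + 1 - (j : ℕ) from by omega] at h9
        omega
    rw [hE]
    exact dj_identity n (Wmat U (n + 2) r lam mu)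
  · -- non-skew case: the corresponding minor vanishes
    have hex : ∃ i0, i0 ≤ n ∧ lam (i0 + 1) ≤ mu i0 := by
      by_contra hcon
      push_neg at hcon
      apply hEs
      refine ⟨⟨fun i => ?_, fun i => ?_, fun i hi => ?_⟩,
        ⟨fun i => ?_, fun i => ?_, fun i hi => ?_⟩, fun i => ?_⟩ <;>
        (have e2 := hlam (i + 1); have e3 := hmu i; have e5 := hsub i;
         dsimp only; split_ifs <;> first | omega | (have e7 := hcon i (by omega); omega))
    obtain ⟨i0, hi0, hle⟩ := hex
    have hz : ((Wmat U (n + 2) r lam mu).submatrix Fin.succ Fin.castSucc).det = 0 := by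
      apply det_zero_of_block _ (⟨n - i0, by omega⟩ : Fin (n + 1))
      intro i j h1 h2
      have hii : n - i0 ≤ (i : ℕ) := h1
      have hjj : (j : ℕ) ≤ n - i0 := h2
      have hi := i.isLt
      have hj := j.isLt
      simp only [submatrix_apply, Wmat, of_apply, Fin.val_succ, Fin.coe_castSucc]
      apply matExt_lower hU
      have hmono1 : mu i0 ≤ mu (n - (i : ℕ)) := hAm (by omega)
      have hmono2 : lam (n + 1 - (j : ℕ)) ≤ lam (i0 + 1) := hAl (by omega)
      rw [show n + 2 - 1 - ((i : ℕ) + 1) = n - (i : ℕ) from by omega,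
          show n + 2 - 1 - (j : ℕ) = n + 1 - (j : ℕ) from by omega]
      omega
    rw [SchurVz, if_neg hEs]
    have hdj := dj_identity n (Wmat U (n + 2) r lam mu)
    rw [hz] at hdj
    exact hdj
end
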